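/- arXiv:1403.4930 — 6 statements merged into one kernel-verified Lean document; each statement's English description precedes it below -/
import Mathlib

section
/- Every closed bounded curvature path has length at least 2π. That is, if γ : [0,s] → ℝ² is continuously differentiable with ‖γ'(t)‖ = 1 for all t, γ' is 1-Lipschitz on [0,s], s > 0, γ(0) = γ(s) and γ'(0) = γ'(s), then s ≥ 2π. -/
open Real Set

noncomputable section

/-- Points of the Euclidean plane. -/
abbrev Pt : Type := EuclideanSpace ℝ (Fin 2)

/-- `BCPath γ γ' s` : `γ : [0,s] → ℝ²` is a bounded curvature path (curvature bound 1):
continuously differentiable with derivative `γ'`, unit speed, and `γ'` 1-Lipschitz on `[0,s]`. -/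
structure BCPath (γ γ' : ℝ → Pt) (s : ℝ) : Prop where
  nonneg : 0 ≤ s
  hasDeriv : ∀ t ∈ Icc (0:ℝ) s, HasDerivWithinAt γ (γ' t) (Icc (0:ℝ) s) t
  contDeriv : ContinuousOn γ' (Icc (0:ℝ) s)
  unitSpeed : ∀ t ∈ Icc (0:ℝ) s, ‖γ' t‖ = 1
  lipDeriv : LipschitzOnWith 1 γ' (Icc (0:ℝ) s)

/-- Endpoint condition: the path starts at `x` tangent to `X` and ends at `y` tangent to `Y`. -/
def EndCond (γ γ' : ℝ → Pt) (s : ℝ) (x X y Y : Pt) : Prop :=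
  γ 0 = x ∧ γ' 0 = X ∧ γ s = y ∧ γ' s = Y

/-- On `[a,b]` the path is an arc of a unit-radius circle. -/
def ArcOn (γ : ℝ → Pt) (a b : ℝ) : Prop :=
  ∃ c : Pt, ∀ t ∈ Icc a b, ‖γ t - c‖ = 1

/-- On `[a,b]` the (unit-speed) path is affine: a line segment. -/
def SegOn (γ γ' : ℝ → Pt) (a b : ℝ) : Prop :=
  ∀ t ∈ Icc a b, γ t = γ a + (t - a) • γ' a

/-- `β` is a csc path on `[0,ℓ]` with break points `t₁ ≤ t₂`: circle arc, segment, circle arc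
(pieces possibly of zero length). -/
def IsCSC (β β' : ℝ → Pt) (ℓ t₁ t₂ : ℝ) : Prop :=
  0 ≤ t₁ ∧ t₁ ≤ t₂ ∧ t₂ ≤ ℓ ∧ ArcOn β 0 t₁ ∧ SegOn β β' t₁ t₂ ∧ ArcOn β t₂ ℓ

/-- `η` is a cs path on `[0,ℓ]`: a finite concatenation of line segments and unit-circle arcs. -/
def IsCS (η η' : ℝ → Pt) (ℓ : ℝ) : Prop :=
  ∃ (k : ℕ) (t : ℕ → ℝ), t 0 = 0 ∧ t k = ℓ ∧ (∀ i < k, t i ≤ t (i+1)) ∧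
    ∀ i < k, SegOn η η' (t i) (t (i+1)) ∨ ArcOn η (t i) (t (i+1))

/-- Bounded curvature homotopy between `γ` (length `s₀`) and `η` (length `s₁`), both with
endpoint condition `(x,X),(y,Y)`: a one-parameter family of bounded curvature paths `F p`
of length `L p` with that endpoint condition, depending continuously on `p`. -/
def BddHomotopic (x X y Y : Pt) (γ : ℝ → Pt) (s₀ : ℝ) (η : ℝ → Pt) (s₁ : ℝ) : Prop :=
  ∃ (F F' : ℝ → ℝ → Pt) (L : ℝ → ℝ),
    (∀ p ∈ Icc (0:ℝ) 1, BCPath (F p) (F' p) (L p) ∧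
      F p 0 = x ∧ F' p 0 = X ∧ F p (L p) = y ∧ F' p (L p) = Y) ∧
    L 0 = s₀ ∧ L 1 = s₁ ∧
    (∀ t ∈ Icc (0:ℝ) s₀, F 0 t = γ t) ∧
    (∀ t ∈ Icc (0:ℝ) s₁, F 1 t = η t) ∧
    ContinuousOn L (Icc (0:ℝ) 1) ∧
    ContinuousOn (fun q : ℝ × ℝ => F q.1 (q.2 * L q.1)) (Icc (0:ℝ) 1 ×ˢ Icc (0:ℝ) 1)

/-- `θ` is a continuous turning lift of the unit-speed path with derivative `γ'` on `[0,s]`. -/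
def TurningLift (γ' : ℝ → Pt) (s : ℝ) (θ : ℝ → ℝ) : Prop :=
  ContinuousOn θ (Icc (0:ℝ) s) ∧
  ∀ t ∈ Icc (0:ℝ) s,
    γ' t = (WithLp.equiv 2 (Fin 2 → ℝ)).symm ![Real.cos (θ t), Real.sin (θ t)]


open InnerProductGeometry RealInnerProductSpace

instance : Fact (Module.finrank ℝ Pt = 2) := ⟨finrank_euclideanSpace_fin⟩

/-- The standard orientation on the plane. -/
def ori : Orientation ℝ Pt (Fin 2) := (EuclideanSpace.basisFun (Fin 2) ℝ).toBasis.orientation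

lemma abs_toReal_coe_le (x : ℝ) : |((x : Real.Angle)).toReal| ≤ |x| := by
  rcases le_or_gt (|x|) π with h | h
  · rcases eq_or_lt_of_le (neg_le_of_abs_le h) with h1 | h1
    · rw [← h1]
      rw [show ((-π : ℝ) : Real.Angle) = ((π:ℝ) : Real.Angle) by
        rw [Real.Angle.coe_neg, Real.Angle.neg_coe_pi], Real.Angle.toReal_pi, abs_neg]
    · rw [Real.Angle.toReal_coe_eq_self_iff.2 ⟨h1, le_of_abs_le h⟩]
  · exact (Real.Angle.abs_toReal_le_pi _).trans h.le

lemma angle_triangle2 {x y z : Pt} (hx : x ≠ 0) (hy : y ≠ 0) (hz : z ≠ 0) :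
    angle x z ≤ angle x y + angle y z := by
  rw [ori.angle_eq_abs_oangle_toReal hx hz, ori.angle_eq_abs_oangle_toReal hx hy,
    ori.angle_eq_abs_oangle_toReal hy hz, ← ori.oangle_add hx hy hz]
  set θ := ori.oangle x y; set φ := ori.oangle y z
  have hco : ((θ.toReal + φ.toReal : ℝ) : Real.Angle) = θ + φ := by
    rw [Real.Angle.coe_add, Real.Angle.coe_toReal, Real.Angle.coe_toReal]
  calc |(θ + φ).toReal| = |(((θ.toReal + φ.toReal : ℝ) : Real.Angle)).toReal| := by rw [hco]
    _ ≤ |θ.toReal + φ.toReal| := abs_toReal_coe_le _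
    _ ≤ |θ.toReal| + |φ.toReal| := abs_add_le _ _

lemma angle_eq_two_arcsin {a b : Pt} (ha : ‖a‖ = 1) (hb : ‖b‖ = 1) :
    angle a b = 2 * Real.arcsin (‖a - b‖ / 2) := by
  have hd2 : ‖a - b‖ ≤ 2 := by
    calc ‖a - b‖ ≤ ‖a‖ + ‖b‖ := norm_sub_le _ _
      _ = 2 := by rw [ha, hb]; norm_num
  have hinner : ⟪a, b⟫ = 1 - ‖a - b‖ ^ 2 / 2 := by
    have := @norm_sub_sq_real Pt _ _ a b
    rw [ha, hb] at this
    nlinarith [this]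
  have hmem : ‖a - b‖ / 2 ∈ Icc (-1 : ℝ) 1 := by
    refine ⟨by linarith [norm_nonneg (a-b)], by linarith⟩
  have hcos : Real.cos (2 * Real.arcsin (‖a - b‖ / 2)) = 1 - ‖a - b‖ ^ 2 / 2 := by
    rw [Real.cos_two_mul, Real.cos_sq', Real.sin_arcsin hmem.1 hmem.2]
    ring
  have hrange : 2 * Real.arcsin (‖a - b‖ / 2) ∈ Icc (0:ℝ) π := by
    constructor
    · have := Real.arcsin_nonneg.2 (by linarith [norm_nonneg (a-b)] : (0:ℝ) ≤ ‖a - b‖ / 2)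
      linarith
    · have := Real.arcsin_le_pi_div_two (‖a - b‖ / 2)
      linarith
  rw [angle, ha, hb, mul_one, div_one, hinner, ← hcos, Real.arccos_cos hrange.1 hrange.2]

lemma angle_le_dist {f : ℝ → Pt} {a b : ℝ} (hf : LipschitzOnWith 1 f (Icc a b))
    (hnorm : ∀ t ∈ Icc a b, ‖f t‖ = 1) {u v : ℝ} (hu : u ∈ Icc a b) (hv : v ∈ Icc a b)
    (huv : u ≤ v) : angle (f u) (f v) ≤ v - u := by
  -- chord bound
  have chord : ∀ w z : ℝ, w ∈ Icc a b → z ∈ Icc a b → w ≤ z →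
      angle (f w) (f z) ≤ 2 * Real.arcsin ((z - w) / 2) := by
    intro w z hw hz hwz
    rw [angle_eq_two_arcsin (hnorm _ hw) (hnorm _ hz)]
    have hd : ‖f w - f z‖ ≤ z - w := by
      have hdl : dist (f w) (f z) ≤ dist w z := by simpa using hf.dist_le_mul w hw z hz
      rw [← dist_eq_norm]
      calc dist (f w) (f z) ≤ dist w z := hdl
        _ = z - w := by rw [dist_comm, Real.dist_eq, abs_of_nonneg (by linarith)]
    have := Real.monotone_arcsin (by linarith : ‖f w - f z‖ / 2 ≤ (z - w) / 2)
    linarith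
  have fne : ∀ t ∈ Icc a b, f t ≠ 0 := fun t ht => by
    intro h0; have := hnorm t ht; rw [h0, norm_zero] at this; norm_num at this
  -- subdivision
  have subdiv : ∀ (h : ℝ), 0 ≤ h → ∀ k : ℕ, ∀ w : ℝ, w ∈ Icc a b → w + k * h ∈ Icc a b →
      angle (f w) (f (w + k * h)) ≤ k * (2 * Real.arcsin (h / 2)) := by
    intro h hh k
    induction k with
    | zero =>
      intro w hw _
      simp only [Nat.cast_zero, zero_mul, add_zero]
      rw [angle_self (fne w hw)]
    | succ k ih =>
      intro w hw hwk
      have hle1 : w ≤ w + k * h := by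
        have : (0:ℝ) ≤ k * h := by positivity
        linarith
      have hle2 : w + k * h ≤ w + (k+1 : ℕ) * h := by push_cast; nlinarith
      have hmid : w + k * h ∈ Icc a b :=
        ⟨le_trans hw.1 hle1, le_trans hle2 hwk.2⟩
      calc angle (f w) (f (w + ((k+1 : ℕ)) * h))
          ≤ angle (f w) (f (w + k * h)) + angle (f (w + k * h)) (f (w + (k+1 : ℕ) * h)) :=
            angle_triangle2 (fne _ hw) (fne _ hmid) (fne _ hwk)
        _ ≤ k * (2 * Real.arcsin (h / 2)) + 2 * Real.arcsin (h / 2) := by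
            have h2 : angle (f (w + k * h)) (f (w + (k+1 : ℕ) * h)) ≤ 2 * Real.arcsin (h/2) := by
              have := chord _ _ hmid hwk hle2
              rw [show w + ((k:ℕ)+1 : ℕ) * h - (w + k * h) = h by push_cast; ring] at this
              exact this
            exact add_le_add (ih w hw hmid) h2
        _ = (k+1 : ℕ) * (2 * Real.arcsin (h / 2)) := by push_cast; ring
  -- for each n ≥ 1
  set c := v - u with hc
  have hc0 : 0 ≤ c := by linarith
  have key : ∀ n : ℕ, 1 ≤ n → angle (f u) (f v) ≤ n * (2 * Real.arcsin (c / (2 * n))) := by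
    intro n hn
    have hnpos : (0:ℝ) < n := by exact_mod_cast hn
    have hh : (0:ℝ) ≤ c / n := by positivity
    have := subdiv (c / n) hh n u hu (by rw [show u + n * (c/n) = v by field_simp; ring]; exact hv)
    rw [show u + n * (c/n) = v by field_simp; ring] at this
    calc angle (f u) (f v) ≤ n * (2 * Real.arcsin (c / n / 2)) := this
      _ = n * (2 * Real.arcsin (c / (2 * n))) := by rw [show c / n / 2 = c / (2*n) by ring]
  rcases eq_or_lt_of_le hc0 with h0 | hcpos
  · have huv' : u = v := by simp only [hc] at h0; linarith
    rw [← h0, huv', angle_self (fne v hv)]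
  -- limit
  · have hslope : Filter.Tendsto (fun x : ℝ => Real.arcsin x / x) (nhdsWithin 0 {(0:ℝ)}ᶜ) (nhds 1) := by
      have hd : HasDerivAt Real.arcsin 1 0 := by
        have := Real.hasDerivAt_arcsin (by norm_num : (0:ℝ) ≠ -1) (by norm_num : (0:ℝ) ≠ 1)
        simpa using this
      have hsl := hasDerivAt_iff_tendsto_slope.1 hd
      exact hsl.congr fun x => by simp [slope_def_field, Real.arcsin_zero]
    have hxn : Filter.Tendsto (fun n : ℕ => c / (2 * n)) Filter.atTop (nhdsWithin 0 {(0:ℝ)}ᶜ) := by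
      apply tendsto_nhdsWithin_of_tendsto_nhds_of_eventually_within
      · have h1 : Filter.Tendsto (fun n : ℕ => (c/2) / n) Filter.atTop (nhds 0) :=
          tendsto_const_div_atTop_nhds_zero_nat (c/2)
        exact h1.congr fun n => div_div c 2 n
      · filter_upwards [Filter.eventually_gt_atTop 0] with n hn
        have : (0:ℝ) < n := by exact_mod_cast hn
        simp only [Set.mem_compl_iff, Set.mem_singleton_iff]
        positivity
    have hlim : Filter.Tendsto (fun n : ℕ => (n:ℝ) * (2 * Real.arcsin (c / (2 * n))))
        Filter.atTop (nhds c) := by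
      have h1 : Filter.Tendsto (fun n : ℕ => c * (Real.arcsin (c / (2*n)) / (c / (2*n))))
          Filter.atTop (nhds c) := by
        have := (hslope.comp hxn).const_mul c
        simpa using this
      refine h1.congr' ?_
      filter_upwards [Filter.eventually_gt_atTop 0] with n hn
      have hnp : (0:ℝ) < n := by exact_mod_cast hn
      field_simp
    refine ge_of_tendsto hlim ?_
    filter_upwards [Filter.eventually_ge_atTop 1] with n hn
    exact key n hn

/-- Every closed bounded curvature path has length at least `2π`. -/
theorem closed_bcpath_length_ge_two_pi (γ γ' : ℝ → Pt) (s : ℝ)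
    (h : BCPath γ γ' s) (hs : 0 < s)
    (hclosed : γ 0 = γ s) (hclosed' : γ' 0 = γ' s) :
    2 * Real.pi ≤ s := by
  by_contra hlt
  push_neg at hlt
  set m := s / 2 with hm
  have hmem : m ∈ Icc (0:ℝ) s := ⟨by linarith, by linarith⟩
  have fne : ∀ t ∈ Icc (0:ℝ) s, γ' t ≠ 0 := fun t ht h0 => by
    have := h.unitSpeed t ht; rw [h0, norm_zero] at this; norm_num at this
  -- pointwise bound
  have hpt : ∀ t ∈ Icc (0:ℝ) s, Real.cos (t - m) ≤ ⟪γ' m, γ' t⟫ := by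
    intro t ht
    have hang : angle (γ' t) (γ' m) ≤ |t - m| := by
      rcases le_total t m with htm | htm
      · rw [abs_of_nonpos (by linarith), neg_sub]
        exact angle_le_dist h.lipDeriv h.unitSpeed ht hmem htm
      · rw [abs_of_nonneg (by linarith), angle_comm]
        exact angle_le_dist h.lipDeriv h.unitSpeed hmem ht htm
    have habs : |t - m| ≤ π := by
      rw [abs_le]
      constructor <;> [skip; skip] <;>
        simp only [hm] at * <;> cases' ht with ht1 ht2 <;> nlinarith [Real.pi_pos]
    have hcos : Real.cos (angle (γ' t) (γ' m)) = ⟪γ' m, γ' t⟫ := by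
      rw [cos_angle, h.unitSpeed t ht, h.unitSpeed m hmem, real_inner_comm]
      norm_num
    calc Real.cos (t - m) = Real.cos |t - m| := (Real.cos_abs _).symm
      _ ≤ Real.cos (angle (γ' t) (γ' m)) :=
          Real.cos_le_cos_of_nonneg_of_le_pi (angle_nonneg _ _) habs hang
      _ = ⟪γ' m, γ' t⟫ := hcos
  -- FTC
  have hγ'cont : ContinuousOn γ' (uIcc (0:ℝ) s) := by rw [uIcc_of_le h.nonneg]; exact h.contDeriv
  have hintble : IntervalIntegrable γ' MeasureTheory.volume 0 s := hγ'cont.intervalIntegrable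
  have hFTC : ∫ t in (0:ℝ)..s, γ' t = γ s - γ 0 := by
    apply intervalIntegral.integral_eq_sub_of_hasDeriv_right_of_le h.nonneg
    · exact fun t ht => (h.hasDeriv t ht).continuousWithinAt
    · intro x hx
      exact ((h.hasDeriv x (Ioo_subset_Icc_self hx)).hasDerivAt
        (Icc_mem_nhds hx.1 hx.2)).hasDerivWithinAt
    · exact hintble
  have hzero : ∫ t in (0:ℝ)..s, ⟪γ' m, γ' t⟫ = 0 := by
    have := (innerSL ℝ (γ' m)).intervalIntegral_comp_comm hintble (a := 0) (b := s)
    simp only [innerSL_apply_apply] at this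
    rw [this, hFTC, ← hclosed, sub_self, inner_zero_right]
  -- integral comparison
  have hglcont : ContinuousOn (fun t => ⟪γ' m, γ' t⟫) (uIcc (0:ℝ) s) :=
    (innerSL ℝ (γ' m)).continuous.comp_continuousOn hγ'cont
  have hmono : ∫ t in (0:ℝ)..s, Real.cos (t - m) ≤ ∫ t in (0:ℝ)..s, ⟪γ' m, γ' t⟫ := by
    apply intervalIntegral.integral_mono_on h.nonneg
    · exact (Continuous.intervalIntegrable (Real.continuous_cos.comp (continuous_id.sub continuous_const)) 0 s)
    · exact hglcont.intervalIntegrable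
    · exact hpt
  have hcosint : ∫ t in (0:ℝ)..s, Real.cos (t - m) = 2 * Real.sin m := by
    rw [intervalIntegral.integral_comp_sub_right (fun x => Real.cos x) m, integral_cos]
    rw [show (0:ℝ) - m = -m by ring, Real.sin_neg, show s - m = m by rw [hm]; ring]
    ring
  have hsinpos : 0 < Real.sin m :=
    Real.sin_pos_of_pos_of_lt_pi (by linarith) (by rw [hm]; linarith)
  rw [hzero, hcosint] at hmono
  linarith
end
end

section
/- No closed bounded curvature path lies in the interior of a unit radius disk: if γ : [0,s] → ℝ² is continuously differentiable with ‖γ'(t)‖ = 1 for all t, γ' is 1-Lipschitz, s > 0, γ(0) = γ(s) and γ'(0) = γ'(s), then there is no point c ∈ ℝ² such that γ(t) lies in the open ball of radius 1 centred at c for all t ∈ [0,s]. -/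
open Real Set

noncomputable section

/-- Second-order Taylor estimate for a bounded curvature path. -/
lemma bcpath_taylor {γ γ' : ℝ → Pt} {s : ℝ} (h : BCPath γ γ' s)
    {a b : ℝ} (ha : a ∈ Icc (0:ℝ) s) (hb : b ∈ Icc (0:ℝ) s) (hab : a ≤ b) :
    ‖γ b - γ a - (b - a) • γ' a‖ ≤ (b - a) ^ 2 / 2 := by
  have hsub : Icc a b ⊆ Icc (0:ℝ) s := Icc_subset_Icc ha.1 hb.2
  have hγcont : ContinuousOn γ (Icc (0:ℝ) s) := fun t ht =>
    (h.hasDeriv t ht).continuousWithinAt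
  set f : ℝ → Pt := fun t => γ t - γ a - (t - a) • γ' a with hfdef
  have hfc : ContinuousOn f (Icc a b) := by
    apply ((hγcont.mono hsub).sub continuousOn_const).sub
    exact (continuousOn_id.sub continuousOn_const).smul continuousOn_const
  have hfd : ∀ x ∈ Ico a b, HasDerivWithinAt f (γ' x - γ' a) (Ici x) x := by
    intro x hx
    have hx' : x ∈ Icc (0:ℝ) s := hsub ⟨hx.1, hx.2.le⟩
    have hx'' : x ∈ Ico (0:ℝ) s := ⟨hx'.1, lt_of_lt_of_le hx.2 hb.2⟩
    have hmem : Icc (0:ℝ) s ∈ nhdsWithin x (Ici x) := Icc_mem_nhdsGE_of_mem hx''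
    have h1 : HasDerivWithinAt γ (γ' x) (Ici x) x :=
      (h.hasDeriv x hx').mono_of_mem_nhdsWithin hmem
    have h2 : HasDerivWithinAt (fun t : ℝ => t - a) 1 (Ici x) x := by
      simpa using (hasDerivWithinAt_id x (Ici x)).sub_const a
    have h3 : HasDerivWithinAt (fun t : ℝ => (t - a) • γ' a) ((1:ℝ) • γ' a) (Ici x) x :=
      h2.smul_const (γ' a)
    have := (h1.sub_const (γ a)).sub h3
    simp only [one_smul] at this; exact this
  have hB : ∀ x : ℝ, HasDerivAt (fun t : ℝ => (t - a) ^ 2 / 2) (x - a) x := by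
    intro x
    have h2 : HasDerivAt (fun t : ℝ => t - a) 1 x := by
      simpa using (hasDerivAt_id x).sub_const a
    have := (h2.pow 2).div_const 2
    exact this.congr_deriv (by push_cast; ring)
  have bound : ∀ x ∈ Ico a b, ‖γ' x - γ' a‖ ≤ x - a := by
    intro x hx
    have hx' : x ∈ Icc (0:ℝ) s := hsub ⟨hx.1, hx.2.le⟩
    have := h.lipDeriv.dist_le_mul x hx' a (hsub ⟨le_refl a, hab⟩)
    rw [dist_eq_norm, Real.dist_eq] at this
    simpa [abs_of_nonneg (sub_nonneg.2 hx.1)] using this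
  have key : ∀ x ∈ Icc a b, ‖f x‖ ≤ (x - a) ^ 2 / 2 := fun x hx =>
    image_norm_le_of_norm_deriv_right_le_deriv_boundary hfc hfd (by simp [hfdef]) hB bound hx
  exact key b ⟨hab, le_refl b⟩

/-- At a farthest point `t₀ < s` of a bounded curvature path (staying strictly inside a unit
disk around `c`), the tangent makes a strictly obtuse angle with the radius vector. -/
lemma bcpath_key {γ γ' : ℝ → Pt} {s : ℝ} (h : BCPath γ γ' s) (c : Pt) {t₀ : ℝ}
    (ht₀ : t₀ ∈ Icc (0:ℝ) s) (hlt : t₀ < s)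
    (hmax : ∀ t ∈ Icc (0:ℝ) s, ‖γ t - c‖ ≤ ‖γ t₀ - c‖)
    (hr : ‖γ t₀ - c‖ < 1) :
    inner ℝ (γ t₀ - c) (γ' t₀) < (0:ℝ) := by
  set r : ℝ := ‖γ t₀ - c‖ with hrdef
  have hr0 : 0 ≤ r := norm_nonneg _
  set ε : ℝ := 1 - r with hεdef
  have hε : 0 < ε := by rw [hεdef]; linarith
  set u : ℝ := min (s - t₀) (ε / 2) with hudef
  have hu0 : 0 < u := lt_min (by linarith) (by linarith)
  have huε : u ≤ ε / 2 := min_le_right _ _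
  have hust : u ≤ s - t₀ := by rw [hudef]; exact min_le_left _ _
  have ht₁ : t₀ + u ∈ Icc (0:ℝ) s := ⟨by linarith [ht₀.1], by linarith⟩
  set d : Pt := γ t₀ - c with hddef
  set X : Pt := γ' t₀ with hXdef
  set E : Pt := γ (t₀ + u) - γ t₀ - u • X with hEdef
  have hE : ‖E‖ ≤ u ^ 2 / 2 := by
    have := bcpath_taylor h ht₀ ht₁ (by linarith)
    simpa [hEdef, hXdef] using this
  have hXnorm : ‖X‖ = 1 := h.unitSpeed t₀ ht₀
  have hdecomp : γ (t₀ + u) - c = (d + u • X) + E := by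
    rw [hEdef, hddef]; abel
  have hmax' : ‖(d + u • X) + E‖ ≤ r := by
    rw [← hdecomp]; exact hmax _ ht₁
  -- squared norm expansion
  have hsq : ‖(d + u • X) + E‖ ^ 2 =
      ‖d + u • X‖ ^ 2 + 2 * inner ℝ (d + u • X) E + ‖E‖ ^ 2 := by
    rw [norm_add_sq_real]
  have hsq2 : ‖d + u • X‖ ^ 2 = r ^ 2 + 2 * (u * inner ℝ d X) + u ^ 2 := by
    rw [norm_add_sq_real, real_inner_smul_right, norm_smul, hXnorm, Real.norm_eq_abs,
      abs_of_pos hu0, ← hrdef]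
    ring
  have hip : (inner ℝ (d + u • X) E : ℝ) ≥ -((r + u) * (u ^ 2 / 2)) := by
    have h1 : |(inner ℝ (d + u • X) E : ℝ)| ≤ ‖d + u • X‖ * ‖E‖ := abs_real_inner_le_norm _ _
    have h2 : ‖d + u • X‖ ≤ r + u := by
      calc ‖d + u • X‖ ≤ ‖d‖ + ‖u • X‖ := norm_add_le _ _
        _ = r + u := by
          rw [norm_smul, hXnorm, Real.norm_eq_abs, abs_of_pos hu0, ← hrdef]; ring
    have h3 : ‖d + u • X‖ * ‖E‖ ≤ (r + u) * (u ^ 2 / 2) :=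
      mul_le_mul h2 hE (norm_nonneg _) (by positivity)
    have h4 := neg_abs_le (inner ℝ (d + u • X) E : ℝ)
    linarith
  have hsqle : ‖(d + u • X) + E‖ ^ 2 ≤ r ^ 2 :=
    pow_le_pow_left₀ (norm_nonneg _) hmax' 2
  have hEnn : (0:ℝ) ≤ ‖E‖ ^ 2 := by positivity
  -- combine: 2 u A + u^2 - (r+u) u^2 ≤ 0
  have hcomb : 2 * (u * (inner ℝ d X : ℝ)) ≤ (u - ε) * u ^ 2 := by
    have hεr : ε = 1 - r := hεdef
    nlinarith [hsq, hsq2, hip, hsqle, hEnn]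
  have hneg : (u - ε) * u ^ 2 < 0 :=
    mul_neg_of_neg_of_pos (by linarith) (by positivity)
  have hfin : u * (2 * (inner ℝ d X : ℝ)) < 0 := by linarith
  by_contra hcon
  push_neg at hcon
  have : 0 ≤ u * (2 * (inner ℝ d X : ℝ)) := by
    apply mul_nonneg hu0.le
    have : (inner ℝ d X : ℝ) = inner ℝ (γ t₀ - c) (γ' t₀) := by rw [hddef, hXdef]
    linarith [this ▸ hcon]
  linarith

/-- Reversing a bounded curvature path. -/
lemma bcpath_reverse {γ γ' : ℝ → Pt} {s : ℝ} (h : BCPath γ γ' s) :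
    BCPath (fun t => γ (s - t)) (fun t => -γ' (s - t)) s := by
  have hmap : MapsTo (fun u : ℝ => s - u) (Icc (0:ℝ) s) (Icc (0:ℝ) s) := by
    intro x hx; constructor <;> simp <;> [linarith [hx.2]; linarith [hx.1]]
  refine ⟨h.nonneg, ?_, ?_, ?_, ?_⟩
  · intro t ht
    have ht' : s - t ∈ Icc (0:ℝ) s := hmap ht
    have hinner : HasDerivWithinAt (fun u : ℝ => s - u) (-1) (Icc (0:ℝ) s) t := by
      simpa using (hasDerivWithinAt_id t (Icc (0:ℝ) s)).const_sub s
    have := (h.hasDeriv (s - t) ht').scomp t hinner hmap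
    simp only [neg_smul, one_smul] at this; exact this
  · exact (h.contDeriv.comp (continuousOn_const.sub continuousOn_id) hmap).neg
  · intro t ht; simpa using h.unitSpeed (s - t) (hmap ht)
  · rw [lipschitzOnWith_iff_dist_le_mul]
    intro x hx y hy
    have := h.lipDeriv.dist_le_mul (s - x) (hmap hx) (s - y) (hmap hy)
    calc dist (-γ' (s - x)) (-γ' (s - y)) = dist (γ' (s - x)) (γ' (s - y)) := dist_neg_neg _ _
      _ ≤ 1 * dist (s - x) (s - y) := this
      _ = 1 * dist x y := by rw [Real.dist_eq, Real.dist_eq]; congr 1; rw [abs_sub_comm]; congr 1; ring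

/-- No closed bounded curvature path lies in the interior of a unit radius disk. -/
theorem closed_bcpath_not_in_open_unit_disk (γ γ' : ℝ → Pt) (s : ℝ)
    (h : BCPath γ γ' s) (hs : 0 < s)
    (hclosed : γ 0 = γ s) (hclosed' : γ' 0 = γ' s) :
    ¬ ∃ c : Pt, ∀ t ∈ Icc (0:ℝ) s, γ t ∈ Metric.ball c 1 := by
  rintro ⟨c, hc⟩
  have hγcont : ContinuousOn γ (Icc (0:ℝ) s) := fun t ht =>
    (h.hasDeriv t ht).continuousWithinAt
  have hgc : ContinuousOn (fun t => ‖γ t - c‖) (Icc (0:ℝ) s) :=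
    (hγcont.sub continuousOn_const).norm
  obtain ⟨t₀, ht₀, hmax⟩ := isCompact_Icc.exists_isMaxOn (nonempty_Icc.2 hs.le) hgc
  have hmax : ∀ t ∈ Icc (0:ℝ) s, ‖γ t - c‖ ≤ ‖γ t₀ - c‖ := fun t ht => hmax ht
  -- replace t₀ by a max point u with u < s
  obtain ⟨u, hu, hus, humax⟩ : ∃ u, u ∈ Icc (0:ℝ) s ∧ u < s ∧
      ∀ t ∈ Icc (0:ℝ) s, ‖γ t - c‖ ≤ ‖γ u - c‖ := by
    rcases lt_or_eq_of_le ht₀.2 with hlt | heq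
    · exact ⟨t₀, ht₀, hlt, hmax⟩
    · refine ⟨0, ⟨le_refl 0, hs.le⟩, hs, ?_⟩
      intro t ht
      rw [hclosed, ← heq]
      exact hmax t ht
  have hr : ‖γ u - c‖ < 1 := by
    have := hc u hu
    rwa [Metric.mem_ball, dist_eq_norm] at this
  have hA : inner ℝ (γ u - c) (γ' u) < (0:ℝ) := bcpath_key h c hu hus humax hr
  -- reversed path
  have hrev := bcpath_reverse h
  -- choose the max point for the reversed path
  set w : ℝ := if u = 0 then 0 else s - u with hwdef
  have hws : s - w ∈ Icc (0:ℝ) s ∧ (γ (s - w) - c = γ u - c) ∧ γ' (s - w) = γ' u := by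
    by_cases h0 : u = 0
    · simp [hwdef, h0, ← hclosed, ← hclosed', hs.le]
    · simp only [hwdef, if_neg h0]
      have : s - (s - u) = u := by ring
      rw [this]
      exact ⟨hu, rfl, rfl⟩
  have hwmem : w ∈ Icc (0:ℝ) s := by
    by_cases h0 : u = 0
    · simp [hwdef, h0, hs.le]
    · simp only [hwdef, if_neg h0]
      constructor <;> [linarith [hu.2]; linarith [hu.1]]
  have hwlt : w < s := by
    by_cases h0 : u = 0
    · simpa [hwdef, h0] using hs
    · simp only [hwdef, if_neg h0]
      have : 0 < u := lt_of_le_of_ne hu.1 (Ne.symm h0)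
      linarith
  have hwmax : ∀ t ∈ Icc (0:ℝ) s, ‖γ (s - t) - c‖ ≤ ‖γ (s - w) - c‖ := by
    intro t ht
    rw [hws.2.1]
    apply humax
    constructor <;> simp <;> [linarith [ht.2]; linarith [ht.1]]
  have hwr : ‖γ (s - w) - c‖ < 1 := by rw [hws.2.1]; exact hr
  have hB := bcpath_key hrev c hwmem hwlt hwmax hwr
  simp only [hws.2.1, hws.2.2, inner_neg_right] at hB
  linarith
end
end

section
/- Every closed bounded curvature path has a pair of points at distance at least 2: if γ : [0,s] → ℝ² is continuously differentiable with ‖γ'(t)‖ = 1 for all t, γ' is 1-Lipschitz, s > 0, γ(0) = γ(s) and γ'(0) = γ'(s), then there exist t₁, t₂ ∈ [0,s] with ‖γ(t₁) − γ(t₂)‖ ≥ 2. -/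
open Real Set Filter
open scoped RealInnerProductSpace Topology

noncomputable section

lemma gram_inner_ineq (u v w : Pt) (hu : ‖u‖ = 1) (hv : ‖v‖ = 1) (hw : ‖w‖ = 1) :
    ⟪u, v⟫ * ⟪v, w⟫ -
      Real.sqrt (1 - ⟪u, v⟫ ^ 2) * Real.sqrt (1 - ⟪v, w⟫ ^ 2) ≤ ⟪u, w⟫ := by
  have hvv : ⟪v, v⟫ = 1 := by rw [real_inner_self_eq_norm_sq, hv]; norm_num
  have huu : ⟪u, u⟫ = 1 := by rw [real_inner_self_eq_norm_sq, hu]; norm_num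
  have hww : ⟪w, w⟫ = 1 := by rw [real_inner_self_eq_norm_sq, hw]; norm_num
  have h1 : ⟪u - ⟪u, v⟫ • v, w - ⟪v, w⟫ • v⟫ = ⟪u, w⟫ - ⟪u, v⟫ * ⟪v, w⟫ := by
    simp only [inner_sub_left, inner_sub_right, real_inner_smul_left, real_inner_smul_right, hvv]
    ring
  have h2 : ‖u - ⟪u, v⟫ • v‖ = Real.sqrt (1 - ⟪u, v⟫ ^ 2) := by
    rw [← Real.sqrt_sq (norm_nonneg _)]
    congr 1
    rw [← real_inner_self_eq_norm_sq]
    simp only [inner_sub_left, inner_sub_right, real_inner_smul_left, real_inner_smul_right, hvv,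
      huu]
    rw [real_inner_comm v u]
    ring
  have h3 : ‖w - ⟪v, w⟫ • v‖ = Real.sqrt (1 - ⟪v, w⟫ ^ 2) := by
    rw [← Real.sqrt_sq (norm_nonneg _)]
    congr 1
    rw [← real_inner_self_eq_norm_sq]
    simp only [inner_sub_left, inner_sub_right, real_inner_smul_left, real_inner_smul_right, hvv,
      hww]
    rw [real_inner_comm v w]
    ring
  have h4 := abs_real_inner_le_norm (u - ⟪u, v⟫ • v) (w - ⟪v, w⟫ • v)
  rw [h1, h2, h3] at h4
  have h5 := neg_abs_le (⟪u, w⟫ - ⟪u, v⟫ * ⟪v, w⟫)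
  linarith

lemma inner_cos_triangle {u v w : Pt} (hu : ‖u‖ = 1) (hv : ‖v‖ = 1) (hw : ‖w‖ = 1)
    {α β : ℝ} (hα : 0 ≤ α) (hβ : 0 ≤ β) (hαβ : α + β ≤ π)
    (h1 : Real.cos α ≤ ⟪u, v⟫) (h2 : Real.cos β ≤ ⟪v, w⟫) :
    Real.cos (α + β) ≤ ⟪u, w⟫ := by
  have habs1 : |⟪u, v⟫| ≤ 1 := by
    have := abs_real_inner_le_norm u v; rw [hu, hv] at this; linarith
  have habs2 : |⟪v, w⟫| ≤ 1 := by
    have := abs_real_inner_le_norm v w; rw [hv, hw] at this; linarith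
  obtain ⟨h1l, h1r⟩ := abs_le.1 habs1
  obtain ⟨h2l, h2r⟩ := abs_le.1 habs2
  set a := Real.arccos ⟪u, v⟫ with ha
  set b := Real.arccos ⟪v, w⟫ with hb
  have hca : Real.cos a = ⟪u, v⟫ := Real.cos_arccos h1l h1r
  have hcb : Real.cos b = ⟪v, w⟫ := Real.cos_arccos h2l h2r
  have hsa : Real.sin a = Real.sqrt (1 - ⟪u, v⟫ ^ 2) := Real.sin_arccos _
  have hsb : Real.sin b = Real.sqrt (1 - ⟪v, w⟫ ^ 2) := Real.sin_arccos _
  have haα : a ≤ α := by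
    by_contra hlt
    push_neg at hlt
    have := Real.cos_lt_cos_of_nonneg_of_le_pi hα (Real.arccos_le_pi _) hlt
    rw [hca] at this; linarith
  have hbβ : b ≤ β := by
    by_contra hlt
    push_neg at hlt
    have := Real.cos_lt_cos_of_nonneg_of_le_pi hβ (Real.arccos_le_pi _) hlt
    rw [hcb] at this; linarith
  have key := gram_inner_ineq u v w hu hv hw
  have hab : Real.cos (a + b) = ⟪u, v⟫ * ⟪v, w⟫ -
      Real.sqrt (1 - ⟪u, v⟫ ^ 2) * Real.sqrt (1 - ⟪v, w⟫ ^ 2) := by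
    rw [Real.cos_add, hca, hcb, hsa, hsb]
  have hmono : Real.cos (α + β) ≤ Real.cos (a + b) :=
    Real.cos_le_cos_of_nonneg_of_le_pi
      (add_nonneg (Real.arccos_nonneg _) (Real.arccos_nonneg _)) hαβ (add_le_add haα hbβ)
  linarith

lemma inner_ge_cos (v : ℝ → Pt) (s : ℝ)
    (hunit : ∀ t ∈ Icc (0:ℝ) s, ‖v t‖ = 1)
    (hlip : ∀ t ∈ Icc (0:ℝ) s, ∀ r ∈ Icc (0:ℝ) s, ‖v t - v r‖ ≤ |t - r|)
    {a b : ℝ} (ha : a ∈ Icc (0:ℝ) s) (hb : b ∈ Icc (0:ℝ) s) (hab : a ≤ b)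
    (hπ : b - a ≤ π) : Real.cos (b - a) ≤ ⟪v a, v b⟫ := by
  set Δ := b - a with hΔdef
  have hΔ0 : 0 ≤ Δ := sub_nonneg.2 hab
  -- main finite-subdivision estimate
  have main : ∀ n : ℕ, 2 ≤ n →
      Real.cos (min π ((n : ℝ) * (2 * Real.arcsin (Δ / (2 * n))))) ≤ ⟪v a, v b⟫ := by
    intro n hn2
    have hn0 : (0:ℝ) < n := by positivity
    set h : ℝ := Δ / n with hhdef
    have hh0 : 0 ≤ h := div_nonneg hΔ0 hn0.le
    set A : ℝ := 2 * Real.arcsin (Δ / (2 * n)) with hAdef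
    have hx0 : 0 ≤ Δ / (2 * n) := by positivity
    have hx1 : Δ / (2 * n) ≤ 1 := by
      rw [div_le_one (by positivity)]
      have : (4:ℝ) ≤ 2 * n := by
        have : (2:ℝ) ≤ n := by exact_mod_cast hn2
        linarith
      have := Real.pi_le_four
      linarith
    have hsinA : Real.sin (Real.arcsin (Δ / (2 * n))) = Δ / (2 * n) :=
      Real.sin_arcsin (by linarith) hx1
    have hA0 : 0 ≤ A := by
      have := Real.arcsin_nonneg.2 hx0
      rw [hAdef]; linarith
    have hcosA : Real.cos A = 1 - h ^ 2 / 2 := by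
      have hpyth := Real.sin_sq_add_cos_sq (Real.arcsin (Δ / (2 * n)))
      rw [hAdef, Real.cos_two_mul]
      have hh2 : Δ / (2 * n) = h / 2 := by rw [hhdef]; ring
      nlinarith [hsinA]
    have hmem : ∀ k : ℕ, k ≤ n → a + k * h ∈ Icc (0:ℝ) s := by
      intro k hk
      constructor
      · have : (0:ℝ) ≤ (k : ℝ) * h := by positivity
        linarith [ha.1]
      · have hkn : (k : ℝ) ≤ n := by exact_mod_cast hk
        have h1 : (k : ℝ) * h ≤ n * h := by
          apply mul_le_mul_of_nonneg_right hkn hh0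
        have h2 : a + (n : ℝ) * h = b := by
          have hfld : (n : ℝ) * ((b - a) / n) = b - a := by field_simp
          rw [hhdef, hΔdef, hfld]; ring
        nlinarith [hb.2]
    have claim : ∀ j : ℕ, j ≤ n →
        Real.cos (min π ((j : ℝ) * A)) ≤ ⟪v a, v (a + j * h)⟫ := by
      intro j
      induction j with
      | zero =>
        intro _
        simp only [Nat.cast_zero, zero_mul, add_zero, mul_zero]
        rw [min_eq_right Real.pi_pos.le, Real.cos_zero]
        have := hunit a ha
        rw [real_inner_self_eq_norm_sq, this]
        norm_num
      | succ j ih =>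
        intro hj1
        have hj : j ≤ n := Nat.le_of_succ_le hj1
        have hmj := hmem j hj
        have hmj1 := hmem (j + 1) hj1
        push_cast at hmj1
        have hchord : ‖v (a + ((j : ℝ) + 1) * h) - v (a + (j : ℝ) * h)‖ ≤ h := by
          have hlp := hlip _ hmj1 _ hmj
          have harg : a + ((j : ℝ) + 1) * h - (a + (j : ℝ) * h) = h := by ring
          rwa [harg, abs_of_nonneg hh0] at hlp
        have hu1 := hunit _ hmj
        have hu2 := hunit _ hmj1
        have hbase : Real.cos A ≤ ⟪v (a + (j : ℝ) * h), v (a + ((j : ℝ) + 1) * h)⟫ := by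
          have hexp := norm_sub_sq_real (v (a + ((j : ℝ) + 1) * h)) (v (a + (j : ℝ) * h))
          rw [hu1, hu2] at hexp
          rw [hcosA, real_inner_comm]
          nlinarith [norm_nonneg (v (a + ((j : ℝ) + 1) * h) - v (a + (j : ℝ) * h)), hchord, hh0]
        have goalcast : ((j + 1 : ℕ) : ℝ) = (j : ℝ) + 1 := by push_cast; ring
        rw [goalcast]
        by_cases hc : ((j : ℝ) + 1) * A ≤ π
        · have hjA : (j : ℝ) * A ≤ π := by nlinarith
          have ihj := ih hj
          rw [min_eq_right hjA] at ihj
          rw [min_eq_right hc]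
          have tri := inner_cos_triangle (hunit _ ha) hu1 hu2 (α := (j : ℝ) * A) (β := A)
            (mul_nonneg (Nat.cast_nonneg j) hA0) hA0 (by linarith) ihj hbase
          have hring : ((j : ℝ) + 1) * A = (j : ℝ) * A + A := by ring
          rw [hring]
          exact tri
        · push_neg at hc
          rw [min_eq_left (by linarith), Real.cos_pi]
          have habs := abs_real_inner_le_norm (v a) (v (a + ((j : ℝ) + 1) * h))
          rw [hunit _ ha, hu2] at habs
          have hneg := neg_abs_le (⟪v a, v (a + ((j : ℝ) + 1) * h)⟫)
          linarith
    have hfin := claim n le_rfl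
    have hnb : a + (n : ℝ) * h = b := by
      have hfld : (n : ℝ) * ((b - a) / n) = b - a := by field_simp
      rw [hhdef, hΔdef, hfld]; ring
    rw [hnb] at hfin
    exact hfin
  -- limit argument
  rcases eq_or_lt_of_le hΔ0 with hΔeq | hΔpos
  · have hba : b = a := by rw [hΔdef] at hΔeq; linarith
    rw [← hΔeq, Real.cos_zero, hba, real_inner_self_eq_norm_sq, hunit a ha]
    norm_num
  · have t0 : Tendsto (fun n : ℕ => Δ / (2 * n)) atTop (𝓝[≠] 0) := by
      apply tendsto_nhdsWithin_of_tendsto_nhds_of_eventually_within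
      · have : (fun n : ℕ => Δ / (2 * n)) = fun n : ℕ => (Δ / 2) / n := by
          funext n; rw [div_div]
        rw [this]
        exact tendsto_const_div_atTop_nhds_zero_nat _
      · filter_upwards [eventually_ge_atTop 1] with n hn
        have hn0 : (0:ℝ) < n := by exact_mod_cast hn
        have : 0 < Δ / (2 * n) := by positivity
        simp [this.ne']
    have slope1 : Tendsto (fun x : ℝ => Real.arcsin x / x) (𝓝[≠] 0) (𝓝 1) := by
      have hd : HasDerivAt Real.arcsin 1 0 := by
        have := Real.hasDerivAt_arcsin (by norm_num : (0:ℝ) ≠ -1) (by norm_num : (0:ℝ) ≠ 1)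
        simpa using this
      have := hasDerivAt_iff_tendsto_slope.1 hd
      refine this.congr (fun x => ?_)
      simp [slope_def_field, Real.arcsin_zero]
    have t1 : Tendsto (fun n : ℕ => (n : ℝ) * (2 * Real.arcsin (Δ / (2 * n)))) atTop (𝓝 Δ) := by
      have comp : Tendsto (fun n : ℕ => Real.arcsin (Δ / (2 * n)) / (Δ / (2 * n))) atTop (𝓝 1) :=
        slope1.comp t0
      have tmul : Tendsto (fun n : ℕ => Δ * (Real.arcsin (Δ / (2 * n)) / (Δ / (2 * n)))) atTop
          (𝓝 (Δ * 1)) := comp.const_mul Δ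
      rw [mul_one] at tmul
      refine tmul.congr' ?_
      filter_upwards [eventually_ge_atTop 1] with n hn
      have hn0 : (0:ℝ) < n := by exact_mod_cast hn
      have hx0 : Δ / (2 * n) ≠ 0 := by positivity
      field_simp
    have t2 : Tendsto (fun n : ℕ => Real.cos (min π ((n : ℝ) * (2 * Real.arcsin (Δ / (2 * n))))))
        atTop (𝓝 (Real.cos Δ)) := by
      have tmin : Tendsto (fun n : ℕ => min π ((n : ℝ) * (2 * Real.arcsin (Δ / (2 * n)))))
          atTop (𝓝 (min π Δ)) := tendsto_const_nhds.min t1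
      rw [min_eq_right hπ] at tmin
      exact (Real.continuous_cos.tendsto _).comp tmin
    exact le_of_tendsto t2 (eventually_atTop.2 ⟨2, fun n hn => main n hn⟩)

/-- Every closed bounded curvature path has a pair of points at distance at least 2. -/
theorem closed_bcpath_exists_points_dist_ge_two (γ γ' : ℝ → Pt) (s : ℝ)
    (h : BCPath γ γ' s) (hs : 0 < s)
    (hclosed : γ 0 = γ s) (hclosed' : γ' 0 = γ' s) :
    ∃ t₁ ∈ Icc (0:ℝ) s, ∃ t₂ ∈ Icc (0:ℝ) s, 2 ≤ ‖γ t₁ - γ t₂‖ := by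
  have hchord : ∀ t ∈ Icc (0:ℝ) s, ∀ r ∈ Icc (0:ℝ) s, ‖γ' t - γ' r‖ ≤ |t - r| := by
    intro t ht r hr
    have := h.lipDeriv.dist_le_mul t ht r hr
    simpa [dist_eq_norm] using this
  have hcontγ : ContinuousOn γ (Icc (0:ℝ) s) :=
    fun t ht => (h.hasDeriv t ht).continuousWithinAt
  have hFTC : ∀ b ∈ Icc (0:ℝ) s, ∫ t in (0:ℝ)..b, γ' t = γ b - γ 0 := by
    intro b hb
    have hint : IntervalIntegrable γ' MeasureTheory.volume 0 b := by
      apply ContinuousOn.intervalIntegrable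
      rw [uIcc_of_le hb.1]
      exact h.contDeriv.mono (Icc_subset_Icc le_rfl hb.2)
    apply intervalIntegral.integral_eq_sub_of_hasDeriv_right_of_le hb.1
      (hcontγ.mono (Icc_subset_Icc le_rfl hb.2))
      (fun x hx => ?_) hint
    have hxmem : x ∈ Icc (0:ℝ) s := ⟨hx.1.le, hx.2.le.trans hb.2⟩
    exact ((h.hasDeriv x hxmem).hasDerivAt
      (Icc_mem_nhds hx.1 (lt_of_lt_of_le hx.2 hb.2))).hasDerivWithinAt
  have hIntInner : ∀ (u : Pt) (b : ℝ), b ∈ Icc (0:ℝ) s →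
      ⟪u, γ b - γ 0⟫ = ∫ t in (0:ℝ)..b, ⟪u, γ' t⟫ := by
    intro u b hb
    have hint : IntervalIntegrable γ' MeasureTheory.volume 0 b := by
      apply ContinuousOn.intervalIntegrable
      rw [uIcc_of_le hb.1]
      exact h.contDeriv.mono (Icc_subset_Icc le_rfl hb.2)
    have := (innerSL ℝ u).intervalIntegral_comp_comm hint (a := 0) (b := b)
    rw [hFTC b hb] at this
    simpa using this.symm
  by_cases hsπ : s < π
  · -- short closed curve: contradiction
    exfalso
    have hpt : ∀ t ∈ Icc (0:ℝ) s, Real.cos t ≤ ⟪γ' 0, γ' t⟫ := by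
      intro t ht
      have := inner_ge_cos γ' s h.unitSpeed hchord
        (a := 0) (b := t) ⟨le_rfl, h.nonneg⟩ ht ht.1 (by linarith [ht.2])
      simpa using this
    have hint1 : IntervalIntegrable (fun t => Real.cos t) MeasureTheory.volume 0 s :=
      Real.continuous_cos.intervalIntegrable 0 s
    have hint2 : IntervalIntegrable (fun t => ⟪γ' 0, γ' t⟫) MeasureTheory.volume 0 s := by
      apply ContinuousOn.intervalIntegrable
      rw [uIcc_of_le h.nonneg]
      exact ContinuousOn.inner continuousOn_const h.contDeriv
    have hmono : ∫ t in (0:ℝ)..s, Real.cos t ≤ ∫ t in (0:ℝ)..s, ⟪γ' 0, γ' t⟫ :=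
      intervalIntegral.integral_mono_on h.nonneg hint1 hint2 hpt
    rw [integral_cos] at hmono
    have hzero : ⟪γ' 0, γ s - γ 0⟫ = 0 := by
      rw [← hclosed, sub_self, inner_zero_right]
    rw [← hIntInner (γ' 0) s ⟨h.nonneg, le_rfl⟩, hzero, Real.sin_zero] at hmono
    have hpos := Real.sin_pos_of_pos_of_lt_pi hs hsπ
    linarith
  · push_neg at hsπ
    have hπ2s : π / 2 ∈ Icc (0:ℝ) s := ⟨by positivity, by linarith [Real.pi_pos]⟩
    have hπs : π ∈ Icc (0:ℝ) s := ⟨Real.pi_pos.le, hsπ⟩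
    set u := γ' (π / 2) with hudef
    have hu : ‖u‖ = 1 := h.unitSpeed _ hπ2s
    have hpt : ∀ t ∈ Icc (0:ℝ) π, Real.sin t ≤ ⟪u, γ' t⟫ := by
      intro t ht
      have hts : t ∈ Icc (0:ℝ) s := ⟨ht.1, ht.2.trans hsπ⟩
      rcases le_total t (π / 2) with hle | hle
      · have := inner_ge_cos γ' s h.unitSpeed hchord
          (a := t) (b := π / 2) hts hπ2s hle (by linarith [Real.pi_pos, ht.1])
        rw [Real.cos_pi_div_two_sub t] at this
        rw [real_inner_comm]
        exact this
      · have := inner_ge_cos γ' s h.unitSpeed hchord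
          (a := π / 2) (b := t) hπ2s hts hle (by linarith [Real.pi_pos, ht.2])
        have harg : t - π / 2 = -(π / 2 - t) := by ring
        rw [harg, Real.cos_neg, Real.cos_pi_div_two_sub t] at this
        exact this
    have hint1 : IntervalIntegrable (fun t => Real.sin t) MeasureTheory.volume 0 π :=
      Real.continuous_sin.intervalIntegrable 0 π
    have hint2 : IntervalIntegrable (fun t => ⟪u, γ' t⟫) MeasureTheory.volume 0 π := by
      apply ContinuousOn.intervalIntegrable
      rw [uIcc_of_le Real.pi_pos.le]
      exact ContinuousOn.inner continuousOn_const (h.contDeriv.mono (Icc_subset_Icc le_rfl hsπ))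
    have hmono : ∫ t in (0:ℝ)..π, Real.sin t ≤ ∫ t in (0:ℝ)..π, ⟪u, γ' t⟫ :=
      intervalIntegral.integral_mono_on Real.pi_pos.le hint1 hint2 hpt
    rw [integral_sin, Real.cos_zero, Real.cos_pi] at hmono
    rw [← hIntInner u π hπs] at hmono
    have hle : ⟪u, γ π - γ 0⟫ ≤ ‖γ π - γ 0‖ := by
      have := real_inner_le_norm u (γ π - γ 0)
      rw [hu, one_mul] at this
      exact this
    refine ⟨π, hπs, 0, ⟨le_rfl, h.nonneg⟩, ?_⟩
    linarith
end
end

section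
/- Let γ : [0,s] → ℝ² be a continuously differentiable curve with ‖γ(t)‖ ≥ 1 for all t ∈ [0,s], and let θ : [0,s] → ℝ be a continuous angular lift of γ, i.e. γ(t) = ‖γ(t)‖·(cos θ(t), sin θ(t)) for all t. Then the length of γ satisfies ∫₀ˢ ‖γ'(t)‖ dt ≥ |θ(s) − θ(0)|. -/
open Real Set

noncomputable section

/-- If `γ` stays at distance at least 1 from the origin and `θ` is a continuous angular
lift of `γ`, then the length of `γ` is at least the total angle swept `|θ(s) − θ(0)|`. -/
theorem length_ge_angle_swept (γ γ' : ℝ → Pt) (θ : ℝ → ℝ) (s : ℝ) (hs : 0 ≤ s)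
    (hderiv : ∀ t ∈ Icc (0:ℝ) s, HasDerivWithinAt γ (γ' t) (Icc (0:ℝ) s) t)
    (hcont : ContinuousOn γ' (Icc (0:ℝ) s))
    (hr : ∀ t ∈ Icc (0:ℝ) s, 1 ≤ ‖γ t‖)
    (hθ : ContinuousOn θ (Icc (0:ℝ) s))
    (hlift : ∀ t ∈ Icc (0:ℝ) s,
      γ t = ‖γ t‖ • ((WithLp.equiv 2 (Fin 2 → ℝ)).symm
        ![Real.cos (θ t), Real.sin (θ t)] : Pt)) :
    |θ s - θ 0| ≤ ∫ t in (0:ℝ)..s, ‖γ' t‖ := by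
  have h0s : (0:ℝ) ∈ Icc (0:ℝ) s := ⟨le_refl 0, hs⟩
  have hss : s ∈ Icc (0:ℝ) s := ⟨hs, le_refl s⟩
  set z : ℝ → ℂ := fun t => (γ t 0 : ℂ) + (γ t 1 : ℂ) * Complex.I with hzdef
  set w : ℝ → ℂ := fun t => (γ' t 0 : ℂ) + (γ' t 1 : ℂ) * Complex.I with hwdef
  -- abs of such complex numbers
  have habs : ∀ v : Pt, ‖((v 0 : ℂ) + (v 1 : ℂ) * Complex.I)‖ = ‖v‖ := by
    intro v
    rw [EuclideanSpace.norm_eq, Complex.norm_def, Complex.normSq_apply]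
    simp [Fin.sum_univ_two, Real.norm_eq_abs, sq_abs]
    ring_nf
  have hzabs : ∀ t, ‖z t‖ = ‖γ t‖ := fun t => habs (γ t)
  have hwabs : ∀ t, ‖w t‖ = ‖γ' t‖ := fun t => habs (γ' t)
  have hzne : ∀ t ∈ Icc (0:ℝ) s, z t ≠ 0 := by
    intro t ht h
    have := hr t ht
    rw [← hzabs t, h] at this
    simp at this; linarith
  -- derivative of z
  have hzderiv : ∀ t ∈ Icc (0:ℝ) s, HasDerivWithinAt z (w t) (Icc 0 s) t := by
    intro t ht
    have h0 : HasDerivWithinAt (fun u => γ u 0) (γ' t 0) (Icc 0 s) t := by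
      exact
        ((EuclideanSpace.proj (0 : Fin 2)).hasFDerivAt.comp_hasDerivWithinAt t (hderiv t ht) :)
    have h1 : HasDerivWithinAt (fun u => γ u 1) (γ' t 1) (Icc 0 s) t := by
      exact
        ((EuclideanSpace.proj (1 : Fin 2)).hasFDerivAt.comp_hasDerivWithinAt t (hderiv t ht) :)
    have h0' : HasDerivWithinAt (fun u => ((γ u 0 : ℝ) : ℂ)) ((γ' t 0 : ℝ) : ℂ) (Icc 0 s) t :=
      Complex.ofRealCLM.hasFDerivAt.comp_hasDerivWithinAt t h0
    have h1' : HasDerivWithinAt (fun u => ((γ u 1 : ℝ) : ℂ)) ((γ' t 1 : ℝ) : ℂ) (Icc 0 s) t :=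
      Complex.ofRealCLM.hasFDerivAt.comp_hasDerivWithinAt t h1
    exact h0'.add (h1'.mul_const Complex.I)
  have hγc : ContinuousOn γ (Icc (0:ℝ) s) := fun t ht => (hderiv t ht).continuousWithinAt
  have hzc : ContinuousOn z (Icc (0:ℝ) s) := by
    apply ContinuousOn.add
    · exact Complex.continuous_ofReal.comp_continuousOn
        ((EuclideanSpace.proj (0 : Fin 2)).continuous.comp_continuousOn hγc)
    · exact (Complex.continuous_ofReal.comp_continuousOn
        ((EuclideanSpace.proj (1 : Fin 2)).continuous.comp_continuousOn hγc)).mul continuousOn_const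
  have hwc : ContinuousOn w (Icc (0:ℝ) s) := by
    apply ContinuousOn.add
    · exact Complex.continuous_ofReal.comp_continuousOn
        ((EuclideanSpace.proj (0 : Fin 2)).continuous.comp_continuousOn hcont)
    · exact (Complex.continuous_ofReal.comp_continuousOn
        ((EuclideanSpace.proj (1 : Fin 2)).continuous.comp_continuousOn hcont)).mul continuousOn_const
  -- polar form
  have hpolar : ∀ t ∈ Icc (0:ℝ) s, z t = (‖γ t‖ : ℂ) * Complex.exp (θ t * Complex.I) := by
    intro t ht
    have h0 : γ t 0 = ‖γ t‖ * Real.cos (θ t) := by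
      have := congrArg (fun v : Pt => v 0) (hlift t ht)
      simpa using this
    have h1 : γ t 1 = ‖γ t‖ * Real.sin (θ t) := by
      have := congrArg (fun v : Pt => v 1) (hlift t ht)
      simpa using this
    rw [hzdef]
    simp only [h0, h1, Complex.exp_mul_I]
    push_cast
    ring
  -- the clamped logarithmic derivative
  set c : ℝ → ℝ := fun u => min (max u 0) s with hcdef
  have hcc : Continuous c := (continuous_id.max continuous_const).min continuous_const
  have hcmem : ∀ u, c u ∈ Icc (0:ℝ) s := fun u => ⟨le_min (le_max_right u 0) hs, min_le_right _ s⟩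
  have hceq : ∀ u ∈ Icc (0:ℝ) s, c u = u := by
    intro u hu
    rw [hcdef]; simp [max_eq_left hu.1, min_eq_left hu.2]
  set g : ℝ → ℂ := fun u => w (c u) / z (c u) with hgdef
  have hgc : Continuous g := by
    apply ContinuousOn.comp_continuous (s := Icc (0:ℝ) s)
      (hwc.div hzc (fun u hu => hzne u hu)) hcc hcmem
  set Λ : ℝ → ℂ := fun t => ∫ u in (0:ℝ)..t, g u with hΛdef
  have hΛd : ∀ t, HasDerivAt Λ (g t) t := fun t =>
    (hgc.integral_hasStrictDerivAt 0 t).hasDerivAt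
  have hΛ0 : Λ 0 = 0 := by simp [hΛdef]
  have hΛc : Continuous Λ := continuous_iff_continuousAt.mpr fun t => (hΛd t).continuousAt

  -- constancy of z * exp(-Λ)
  set F : ℝ → ℂ := fun t => z t * Complex.exp (-Λ t) with hFdef
  have hFd : ∀ t ∈ Icc (0:ℝ) s, HasDerivWithinAt F 0 (Icc 0 s) t := by
    intro t ht
    have hΛ' : HasDerivWithinAt (fun u => Complex.exp (-Λ u))
        (Complex.exp (-Λ t) * -(g t)) (Icc 0 s) t :=
      ((hΛd t).hasDerivWithinAt.neg).cexp
    have h := (hzderiv t ht).mul hΛ'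
    refine h.congr_deriv ?_
    symm
    have hg : g t = w t / z t := by rw [hgdef]; simp [hceq t ht]
    rw [hg]
    field_simp [hzne t ht]
    ring
  have hFcont : ContinuousOn F (Icc (0:ℝ) s) :=
    hzc.mul ((hΛc.neg.cexp).continuousOn)
  have hFconst : ∀ t ∈ Icc (0:ℝ) s, F t = F 0 := by
    apply constant_of_has_deriv_right_zero hFcont
    intro t ht
    exact (hFd t (Ico_subset_Icc_self ht)).mono_of_mem_nhdsWithin
      (Icc_mem_nhdsGE_of_mem ht)
  -- z t = z 0 * exp (Λ t)
  have hzeq : ∀ t ∈ Icc (0:ℝ) s, z t = z 0 * Complex.exp (Λ t) := by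
    intro t ht
    have h := hFconst t ht
    rw [hFdef] at h
    simp only [hΛ0, neg_zero, Complex.exp_zero, mul_one] at h
    have : z t * Complex.exp (-Λ t) * Complex.exp (Λ t) = z 0 * Complex.exp (Λ t) := by rw [h]
    rwa [mul_assoc, ← Complex.exp_add, neg_add_cancel, Complex.exp_zero, mul_one] at this
  -- modulus relation
  have hrel : ∀ t ∈ Icc (0:ℝ) s, ‖γ t‖ = ‖γ 0‖ * Real.exp ((Λ t).re) := by
    intro t ht
    have := congrArg (‖·‖) (hzeq t ht)
    rwa [norm_mul, hzabs, hzabs, Complex.norm_exp] at this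
  -- angle relation mod 2π
  set d : ℝ → ℝ := fun t => θ t - θ 0 - (Λ t).im with hddef
  have hdmul : ∀ t ∈ Icc (0:ℝ) s, ∃ n : ℤ, d t = n * (2 * π) := by
    intro t ht
    have h := hzeq t ht
    rw [hpolar t ht, hpolar 0 h0s, hrel t ht] at h
    have hexpΛ : Complex.exp (Λ t) =
        Complex.exp ((Λ t).re : ℝ) * Complex.exp ((Λ t).im * Complex.I) := by
      rw [← Complex.exp_add]
      congr 1
      simp [Complex.ext_iff]
    rw [hexpΛ] at h
    have hne : ((‖γ 0‖ : ℂ) * Complex.exp ((Λ t).re : ℝ)) ≠ 0 := by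
      apply mul_ne_zero _ (Complex.exp_ne_zero _)
      simp only [ne_eq, Complex.ofReal_eq_zero]
      intro h0; have := hr 0 h0s; rw [h0] at this; linarith
    have key : Complex.exp (θ t * Complex.I) =
        Complex.exp (θ 0 * Complex.I) * Complex.exp ((Λ t).im * Complex.I) := by
      have h2 : ((‖γ 0‖:ℂ) * Complex.exp (((Λ t).re:ℝ))) * Complex.exp (θ t * Complex.I)
          = ((‖γ 0‖:ℂ) * Complex.exp (((Λ t).re:ℝ))) *
            (Complex.exp (θ 0 * Complex.I) * Complex.exp ((Λ t).im * Complex.I)) := by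
        push_cast at h ⊢; linear_combination h
      exact mul_left_cancel₀ hne h2
    have : Complex.exp ((d t : ℝ) * Complex.I) = 1 := by
      rw [hddef]
      push_cast
      rw [sub_mul, sub_mul, Complex.exp_sub, Complex.exp_sub, key]
      field_simp
    rw [Complex.exp_eq_one_iff] at this
    obtain ⟨n, hn⟩ := this
    refine ⟨n, ?_⟩
    have him := congrArg Complex.im hn
    simpa using him
  -- d is continuous on Icc, d 0 = 0, values in 2πℤ ⇒ d s = 0
  have hd0 : d 0 = 0 := by simp [hddef, hΛ0]
  have hdc : ContinuousOn d (Icc (0:ℝ) s) :=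
    (hθ.sub continuousOn_const).sub (Complex.continuous_im.comp hΛc).continuousOn
  have hds : d s = 0 := by
    obtain ⟨n, hn⟩ := hdmul s hss
    rcases eq_or_ne n 0 with h | h
    · simp [hn, h]
    · exfalso
      have hπ : (0:ℝ) < π := Real.pi_pos
      -- π * (sign) lies strictly between 0 and d s
      have hmem : (n.sign : ℝ) * π ∈ uIcc (d 0) (d s) := by
        rw [hd0, hn]
        rcases lt_or_gt_of_ne h with hneg | hpos
        · have h1z : n ≤ -1 := by omega
          have h1 : (n:ℝ) ≤ -1 := by exact_mod_cast h1z
          have hsign : (n.sign : ℝ) = -1 := by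
            rw [Int.sign_eq_neg_one_of_neg hneg]; norm_num
          rw [hsign]
          rw [Set.mem_uIcc]
          right
          constructor
          · nlinarith
          · nlinarith
        · have h1z : 1 ≤ n := hpos
          have h1 : (1:ℝ) ≤ (n:ℝ) := by exact_mod_cast h1z
          have hsign : (n.sign : ℝ) = 1 := by
            rw [Int.sign_eq_one_of_pos hpos]; norm_num
          rw [hsign]
          rw [Set.mem_uIcc]
          left
          constructor
          · nlinarith
          · nlinarith
      have := intermediate_value_uIcc (f := d) (a := 0) (b := s)
        (hdc.mono (by rw [uIcc_of_le hs]))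
      obtain ⟨u, hu, hu2⟩ := this hmem
      rw [uIcc_of_le hs] at hu
      obtain ⟨m, hm⟩ := hdmul u hu
      rw [hu2] at hm
      -- (sign n) * π = m * 2π : impossible
      have hsign : (n.sign : ℝ) = 1 ∨ (n.sign : ℝ) = -1 := by
        rcases lt_or_gt_of_ne h with hneg | hpos
        · right; rw [Int.sign_eq_neg_one_of_neg hneg]; norm_num
        · left; rw [Int.sign_eq_one_of_pos hpos]; norm_num
      have : (n.sign : ℝ) = m * 2 := by
        have hπ0 : (π:ℝ) ≠ 0 := Real.pi_ne_zero
        have h2 : (n.sign : ℝ) * π = (m * 2) * π := by linear_combination hm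
        exact mul_right_cancel₀ hπ0 h2
      rcases hsign with h1 | h1 <;> rw [h1] at this
      · have : (1:ℤ) = m * 2 := by exact_mod_cast this
        omega
      · have : (-1:ℤ) = m * 2 := by exact_mod_cast this
        omega
  -- conclusion
  have hkey : θ s - θ 0 = (Λ s).im := by
    have h : θ s - θ 0 - (Λ s).im = 0 := hds
    linarith
  rw [hkey]
  have hgi : IntervalIntegrable g MeasureTheory.volume 0 s := hgc.intervalIntegrable 0 s
  have him : (Λ s).im = ∫ u in (0:ℝ)..s, (g u).im := by
    rw [hΛdef]
    exact (Complex.imCLM.intervalIntegral_comp_comm hgi).symm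
  rw [him]
  calc |∫ u in (0:ℝ)..s, (g u).im| ≤ ∫ u in (0:ℝ)..s, |(g u).im| :=
        intervalIntegral.abs_integral_le_integral_abs hs
    _ ≤ ∫ t in (0:ℝ)..s, ‖γ' t‖ := by
        apply intervalIntegral.integral_mono_on hs
        · exact ((Complex.continuous_im.comp hgc).abs).intervalIntegrable 0 s
        · exact (hcont.norm.mono (by rw [uIcc_of_le hs])
            ).intervalIntegrable
        · intro u hu
          have h1 : |(g u).im| ≤ ‖g u‖ := Complex.abs_im_le_norm _
          have h2 : ‖g u‖ = ‖γ' u‖ / ‖γ u‖ := by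
            rw [hgdef]
            simp only [hceq u hu, norm_div, hzabs, hwabs]
          have h3 : ‖γ' u‖ / ‖γ u‖ ≤ ‖γ' u‖ :=
            div_le_self (norm_nonneg _) (hr u hu)
          linarith
end
end

section
/- A bounded curvature path making a u-turn whose endpoints are at distance less than 1 has length at least 2: if γ : [0,s] → ℝ² is continuously differentiable with ‖γ'(t)‖ = 1 for all t, γ' is 1-Lipschitz, γ'(s) = −γ'(0), and ‖γ(s) − γ(0)‖ < 1, then s ≥ 2. -/
open Real Set

noncomputable section

/-- A bounded curvature path making a u-turn whose endpoints are at distance less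
than 1 has length at least 2. -/
theorem uturn_length_ge_two (γ γ' : ℝ → Pt) (s : ℝ)
    (h : BCPath γ γ' s)
    (huturn : γ' s = -(γ' 0)) (hclose : ‖γ s - γ 0‖ < 1) :
    2 ≤ s := by
  have h0 : (0:ℝ) ∈ Icc (0:ℝ) s := ⟨le_refl 0, h.nonneg⟩
  have hs : s ∈ Icc (0:ℝ) s := ⟨h.nonneg, le_refl s⟩
  have hd := h.lipDeriv.dist_le_mul s hs 0 h0
  have h1 : dist (γ' s) (γ' 0) = 2 := by
    rw [dist_eq_norm, huturn]
    have : -γ' 0 - γ' 0 = (-2 : ℝ) • γ' 0 := by module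
    rw [this, norm_smul, h.unitSpeed 0 h0]
    norm_num
  have h2 : dist s 0 = s := by
    rw [Real.dist_eq, sub_zero, abs_of_nonneg h.nonneg]
  rw [h1, h2] at hd
  simpa using hd
end
end

section
/- For every fragment there is a csc path with the same endpoint condition whose circular components each have length less than π: let (x,X),(y,Y) ∈ ℝ² × ℝ² with ‖X‖ = ‖Y‖ = 1, and suppose γ : [0,s] → ℝ² is a bounded curvature path with γ(0) = x, γ'(0) = X, γ(s) = y, γ'(s) = Y and s < 1. Then there exists a csc path β from (x,X) to (y,Y), i.e. a bounded curvature path β with the same endpoint condition which is a concatenation of an arc of a unit-radius circle, a line segment, and an arc of a unit-radius circle (pieces possibly of zero length), with each circular arc of length less than π. -/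
open Real Set

noncomputable section

namespace FragAux

def pv (a b : ℝ) : Pt := (WithLp.equiv 2 (Fin 2 → ℝ)).symm ![a, b]

@[simp] lemma pv_zero (a b : ℝ) : pv a b 0 = a := rfl
@[simp] lemma pv_one (a b : ℝ) : pv a b 1 = b := rfl

lemma pt_ext {V W : Pt} (h0 : V 0 = W 0) (h1 : V 1 = W 1) : V = W := by
  apply PiLp.ext
  intro i
  fin_cases i
  · exact h0
  · exact h1

lemma norm_pt (V : Pt) : ‖V‖ = Real.sqrt (V 0 ^ 2 + V 1 ^ 2) := by
  rw [EuclideanSpace.norm_eq]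
  simp [Fin.sum_univ_two, Real.norm_eq_abs, sq_abs]

lemma norm_pt_one {V : Pt} (h : V 0 ^ 2 + V 1 ^ 2 = 1) : ‖V‖ = 1 := by
  rw [norm_pt, h, Real.sqrt_one]

def ev (θ : ℝ) : Pt := pv (cos θ) (sin θ)
def jv (θ : ℝ) : Pt := pv (-sin θ) (cos θ)

@[simp] lemma ev_zero (θ : ℝ) : ev θ 0 = cos θ := rfl
@[simp] lemma ev_one (θ : ℝ) : ev θ 1 = sin θ := rfl
@[simp] lemma jv_zero (θ : ℝ) : jv θ 0 = -sin θ := rfl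
@[simp] lemma jv_one (θ : ℝ) : jv θ 1 = cos θ := rfl

lemma norm_ev (θ : ℝ) : ‖ev θ‖ = 1 := norm_pt_one (by simp [cos_sq_add_sin_sq])

lemma continuous_ev : Continuous ev := by
  have h : ev = fun θ => cos θ • pv 1 0 + sin θ • pv 0 1 := by
    funext θ
    refine pt_ext ?_ ?_ <;> simp [PiLp.add_apply, PiLp.smul_apply, smul_eq_mul]
  rw [h]
  exact (continuous_cos.smul continuous_const).add (continuous_sin.smul continuous_const)

lemma norm_ev_sub (φ ψ : ℝ) : ‖ev φ - ev ψ‖ = 2 * |sin ((φ - ψ) / 2)| := by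
  rw [norm_pt]
  have h0 : (ev φ - ev ψ) 0 = cos φ - cos ψ := by simp [PiLp.sub_apply]
  have h1 : (ev φ - ev ψ) 1 = sin φ - sin ψ := by simp [PiLp.sub_apply]
  rw [h0, h1]
  have h2 : sin ((φ - ψ) / 2) ^ 2 = 1 / 2 - cos (φ - ψ) / 2 := by
    have := sin_sq_eq_half_sub ((φ - ψ) / 2)
    rwa [show 2 * ((φ - ψ) / 2) = φ - ψ by ring] at this
  have h3 : cos (φ - ψ) = cos φ * cos ψ + sin φ * sin ψ := cos_sub φ ψ
  have h4 := sin_sq_add_cos_sq φ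
  have h5 := sin_sq_add_cos_sq ψ
  have key : (cos φ - cos ψ) ^ 2 + (sin φ - sin ψ) ^ 2 = (2 * |sin ((φ - ψ) / 2)|) ^ 2 := by
    rw [mul_pow, sq_abs]; nlinarith [h2, h3, h4, h5]
  rw [key, Real.sqrt_sq (by positivity)]

lemma norm_ev_sub_le (φ ψ : ℝ) : ‖ev φ - ev ψ‖ ≤ |φ - ψ| := by
  rw [norm_ev_sub]
  have h := abs_sin_le_abs (x := (φ - ψ) / 2)
  rw [abs_div] at h
  simp at h
  linarith


lemma contOn_int {a b : ℝ} (hab : a ≤ b) {f : ℝ → ℝ} (h : ContinuousOn f (Icc a b)) :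
    IntervalIntegrable f MeasureTheory.volume a b :=
  ContinuousOn.intervalIntegrable (by rwa [uIcc_of_le hab])

/-- the odd double-angle helper `gg w = 2 sin w |sin w|`. -/
def gg (x : ℝ) : ℝ := 2 * sin x * |sin x|

lemma gg_neg (x : ℝ) : gg (-x) = -gg x := by
  simp [gg, Real.sin_neg, abs_neg]

lemma gg_eval {x : ℝ} (h0 : 0 ≤ x) (hπ : x ≤ π) : gg (x / 2) = 1 - cos x := by
  have hs : 0 ≤ sin (x / 2) :=
    sin_nonneg_of_nonneg_of_le_pi (by linarith) (by linarith [pi_pos])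
  rw [gg, abs_of_nonneg hs]
  have h2 := sin_sq_eq_half_sub (x / 2)
  rw [show 2 * (x / 2) = x by ring] at h2
  nlinarith [h2]

lemma gg_signed {x : ℝ} (h : |x| ≤ π) : gg (x / 2) = (if x < 0 then (-1 : ℝ) else 1) * (1 - cos x) := by
  rcases lt_or_ge x 0 with hx | hx
  · rw [if_pos hx]
    have h1 : gg (x / 2) = -gg (-x / 2) := by
      rw [show (-x / 2 : ℝ) = -(x / 2) by ring, gg_neg]; ring
    have h2 : gg (-x / 2) = 1 - cos (-x) := gg_eval (by linarith) (by
      have := (abs_le.1 h).1; linarith)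
    rw [h1, h2, Real.cos_neg]; ring
  · rw [if_neg (not_lt.2 hx)]
    rw [gg_eval hx ((le_abs_self x).trans h)]; ring

lemma gg_cont : Continuous gg :=
  (continuous_const.mul continuous_sin).mul (continuous_abs.comp continuous_sin)

lemma hasDerivAt_mul_abs (x : ℝ) : HasDerivAt (fun y : ℝ => y * |y|) (2 * |x|) x := by
  rcases lt_trichotomy x 0 with hx | rfl | hx
  · have hg : HasDerivAt (fun y : ℝ => -(y * y)) (2 * |x|) x := by
      have h := ((hasDerivAt_id x).mul (hasDerivAt_id x)).neg
      exact h.congr_deriv (by rw [abs_of_neg hx]; simp [id]; ring)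
    apply hg.congr_of_eventuallyEq
    filter_upwards [Iio_mem_nhds hx] with y hy
    rw [abs_of_neg hy]; ring
  · rw [hasDerivAt_iff_isLittleO]
    have : (fun y : ℝ => y * |y|) =o[nhds (0:ℝ)] fun y => y := by
      rw [Asymptotics.isLittleO_iff]
      intro c hc
      filter_upwards [Metric.ball_mem_nhds (0:ℝ) hc] with y hy
      have h1 : |y| < c := by simpa [Real.dist_eq] using hy
      rw [Real.norm_eq_abs, Real.norm_eq_abs, abs_mul, abs_abs]
      nlinarith [abs_nonneg y]
    simpa using this
  · have hg : HasDerivAt (fun y : ℝ => y * y) (2 * |x|) x := by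
      have h := (hasDerivAt_id x).mul (hasDerivAt_id x)
      exact h.congr_deriv (by rw [abs_of_pos hx]; simp [id]; ring)
    apply hg.congr_of_eventuallyEq
    filter_upwards [Ioi_mem_nhds hx] with y hy
    rw [abs_of_pos hy]

lemma hasDerivAt_gg (w : ℝ) : HasDerivAt gg (4 * |sin w| * cos w) w := by
  have h1 : HasDerivAt (fun y : ℝ => sin y * |sin y|) (2 * |sin w| * cos w) w := by
    have h := (hasDerivAt_mul_abs (sin w)).comp w (Real.hasDerivAt_sin w)
    simpa [mul_comm, mul_assoc, Function.comp_def] using h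
  have h2 := h1.const_mul (2:ℝ)
  have h3 : gg = fun y => 2 * (sin y * |sin y|) := by funext y; rw [gg]; ring
  rw [h3]
  exact h2.congr_deriv (by ring)

lemma abs_sin_double {x : ℝ} (h : |x| ≤ π) : |sin x| = 2 * |sin (x / 2)| * cos (x / 2) := by
  have h1 : sin x = 2 * sin (x / 2) * cos (x / 2) := by
    rw [show x = 2 * (x / 2) by ring, Real.sin_two_mul]
    ring_nf
  have h2 : 0 ≤ cos (x / 2) := by
    apply cos_nonneg_of_mem_Icc
    constructor
    · have := (abs_le.1 h).1; linarith
    · have := (abs_le.1 h).2; linarith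
  rw [h1, abs_mul, abs_mul, abs_two, abs_of_nonneg h2]

lemma abs_sin_signed {x : ℝ} (h : |x| ≤ π) : |sin x| = (if x < 0 then (-1:ℝ) else 1) * sin x := by
  rcases lt_or_ge x 0 with hx | hx
  · rw [if_pos hx, abs_of_nonpos, neg_one_mul]
    apply Real.sin_nonpos_of_nonpos_of_neg_pi_le (le_of_lt hx)
    have := (abs_le.1 h).1; linarith
  · rw [if_neg (not_lt.2 hx), one_mul, abs_of_nonneg]
    exact sin_nonneg_of_nonneg_of_le_pi hx ((le_abs_self x).trans h)

lemma sin_ge_of_mem {w x : ℝ} (hw0 : 0 ≤ w) (hwπ : w ≤ π / 2) (h1 : w ≤ x) (h2 : x ≤ π - w) :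
    sin w ≤ sin x := by
  rcases le_total x (π / 2) with hc | hc
  · exact sin_le_sin_of_le_of_le_pi_div_two (by linarith) hc h1
  · rw [← Real.sin_pi_sub x]
    exact sin_le_sin_of_le_of_le_pi_div_two (by linarith) (by linarith) (by linarith)

lemma sin_le_neg_of_mem {w x : ℝ} (hw0 : 0 ≤ w) (hwπ : w ≤ π / 2) (h1 : x ≤ -w) (h2 : -π + w ≤ x) :
    sin x ≤ -sin w := by
  have h := sin_ge_of_mem hw0 hwπ (x := -x) (by linarith) (by linarith)
  rw [Real.sin_neg] at h; linarith

lemma sin_eq_forces {w x : ℝ} (hw0 : 0 ≤ w) (hwπ : w ≤ π / 2) (h1 : w ≤ x) (h2 : x < π - w)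
    (heq : sin x = sin w) : x = w := by
  by_contra hne
  have hlt : w < x := lt_of_le_of_ne h1 (Ne.symm hne)
  have hstrict : sin w < sin x := by
    rcases le_total x (π / 2) with hc | hc
    · exact strictMonoOn_sin ⟨by linarith, by linarith⟩ ⟨by linarith, hc⟩ hlt
    · rw [← Real.sin_pi_sub x]
      exact strictMonoOn_sin ⟨by linarith, by linarith⟩ ⟨by linarith, by linarith⟩ (by linarith)
  linarith

lemma int_sin_abs {m s : ℝ} (h0 : 0 ≤ m) (hm : m ≤ s) :
    ∫ t in (0:ℝ)..s, sin |t - m| = (1 - cos m) + (1 - cos (s - m)) := by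
  have hcont : Continuous fun t : ℝ => sin |t - m| :=
    continuous_sin.comp ((continuous_id.sub continuous_const).abs)
  have i1 : ∫ t in (0:ℝ)..m, sin |t - m| = 1 - cos m := by
    rw [intervalIntegral.integral_congr (g := fun t => sin (m - t)) (by
      intro t ht
      rw [uIcc_of_le h0] at ht
      show sin |t - m| = sin (m - t)
      rw [abs_of_nonpos (by linarith [ht.2]), neg_sub])]
    have hder : ∀ t ∈ uIcc (0:ℝ) m, HasDerivAt (fun u => cos (m - u)) (sin (m - t)) t := by
      intro t _
      have h := (Real.hasDerivAt_cos (m - t)).comp t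
        ((hasDerivAt_const t m).sub (hasDerivAt_id t))
      exact h.congr_deriv (by ring)
    rw [intervalIntegral.integral_eq_sub_of_hasDerivAt hder
      ((continuous_sin.comp (continuous_const.sub continuous_id)).intervalIntegrable 0 m)]
    simp only [sub_self, sub_zero, Real.cos_zero]
  have i2 : ∫ t in m..s, sin |t - m| = 1 - cos (s - m) := by
    rw [intervalIntegral.integral_congr (g := fun t => sin (t - m)) (by
      intro t ht
      rw [uIcc_of_le hm] at ht
      show sin |t - m| = sin (t - m)
      rw [abs_of_nonneg (by linarith [ht.1])])]
    have hder : ∀ t ∈ uIcc m s, HasDerivAt (fun u => -cos (u - m)) (sin (t - m)) t := by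
      intro t _
      have h := ((Real.hasDerivAt_cos (t - m)).comp t
        ((hasDerivAt_id t).sub (hasDerivAt_const t m))).neg
      exact h.congr_deriv (by ring)
    rw [intervalIntegral.integral_eq_sub_of_hasDerivAt hder
      ((continuous_sin.comp (continuous_id.sub continuous_const)).intervalIntegrable m s)]
    simp only [sub_self, Real.cos_zero, neg_neg]
    ring
  rw [← intervalIntegral.integral_add_adjacent_intervals
    (hcont.intervalIntegrable 0 m) (hcont.intervalIntegrable m s), i1, i2]

lemma int_cos_abs {m s : ℝ} (h0 : 0 ≤ m) (hm : m ≤ s) :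
    ∫ t in (0:ℝ)..s, cos |t - m| = sin m + sin (s - m) := by
  have hcont : Continuous fun t : ℝ => cos |t - m| :=
    continuous_cos.comp ((continuous_id.sub continuous_const).abs)
  have i1 : ∫ t in (0:ℝ)..m, cos |t - m| = sin m := by
    rw [intervalIntegral.integral_congr (g := fun t => cos (m - t)) (by
      intro t ht
      rw [uIcc_of_le h0] at ht
      show cos |t - m| = cos (m - t)
      rw [abs_of_nonpos (by linarith [ht.2]), neg_sub])]
    have hder : ∀ t ∈ uIcc (0:ℝ) m, HasDerivAt (fun u => -sin (m - u)) (cos (m - t)) t := by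
      intro t _
      have h := ((Real.hasDerivAt_sin (m - t)).comp t
        ((hasDerivAt_const t m).sub (hasDerivAt_id t))).neg
      exact h.congr_deriv (by ring)
    rw [intervalIntegral.integral_eq_sub_of_hasDerivAt hder
      ((continuous_cos.comp (continuous_const.sub continuous_id)).intervalIntegrable 0 m)]
    simp only [sub_self, sub_zero, Real.sin_zero, neg_zero, neg_neg]
    ring
  have i2 : ∫ t in m..s, cos |t - m| = sin (s - m) := by
    rw [intervalIntegral.integral_congr (g := fun t => cos (t - m)) (by
      intro t ht
      rw [uIcc_of_le hm] at ht
      show cos |t - m| = cos (t - m)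
      rw [abs_of_nonneg (by linarith [ht.1])])]
    have hder : ∀ t ∈ uIcc m s, HasDerivAt (fun u => sin (u - m)) (cos (t - m)) t := by
      intro t _
      have h := (Real.hasDerivAt_sin (t - m)).comp t
        ((hasDerivAt_id t).sub (hasDerivAt_const t m))
      exact h.congr_deriv (by ring)
    rw [intervalIntegral.integral_eq_sub_of_hasDerivAt hder
      ((continuous_cos.comp (continuous_id.sub continuous_const)).intervalIntegrable m s)]
    simp only [sub_self, Real.sin_zero, sub_zero]
  rw [← intervalIntegral.integral_add_adjacent_intervals
    (hcont.intervalIntegrable 0 m) (hcont.intervalIntegrable m s), i1, i2]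

lemma eq_zero_of_integral_zero {s : ℝ} (hs : 0 < s) {k : ℝ → ℝ} (hk : ContinuousOn k (Icc 0 s))
    (hnn : ∀ t ∈ Icc (0:ℝ) s, 0 ≤ k t) (hint : ∫ t in (0:ℝ)..s, k t = 0) :
    ∀ t ∈ Icc (0:ℝ) s, k t = 0 := by
  by_contra hcon
  push_neg at hcon
  obtain ⟨t0, ht0, hne⟩ := hcon
  have hpos : 0 < k t0 := (hnn t0 ht0).lt_of_ne (Ne.symm hne)
  have hc := hk t0 ht0
  rw [Metric.continuousWithinAt_iff] at hc
  obtain ⟨η, hη, hball⟩ := hc (k t0 / 2) (by linarith)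
  set c := max 0 (t0 - η / 2) with hc_def
  set dd := min s (t0 + η / 2) with hdd_def
  have ht01 := ht0.1
  have ht02 := ht0.2
  have hcd : c < dd := by
    rw [hc_def, hdd_def]
    simp only [lt_min_iff, max_lt_iff]
    refine ⟨⟨hs, by linarith⟩, by linarith, by linarith⟩
  have hc0 : 0 ≤ c := le_max_left _ _
  have hcs : c ≤ s := max_le hs.le (by linarith)
  have hdd0 : 0 ≤ dd := by rw [hdd_def]; simp only [le_min_iff]; exact ⟨hs.le, by linarith⟩
  have hdds : dd ≤ s := min_le_left _ _
  have hsub : Icc c dd ⊆ Icc 0 s := Icc_subset_Icc hc0 hdds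
  have hlb : ∀ t ∈ Icc c dd, k t0 / 2 ≤ k t := by
    intro t ht
    have h1 : t0 - η / 2 ≤ t := le_trans (le_max_right 0 _) ht.1
    have h2 : t ≤ t0 + η / 2 := le_trans ht.2 (min_le_right _ _)
    have hd : dist t t0 < η := by
      rw [Real.dist_eq, abs_lt]; constructor <;> linarith
    have := hball (hsub ht) hd
    rw [Real.dist_eq, abs_lt] at this
    linarith [this.1]
  have hIcd : (0:ℝ) < ∫ t in c..dd, k t := by
    have hconst : ((dd - c) * (k t0 / 2) : ℝ) = ∫ _t in c..dd, (k t0 / 2 : ℝ) := by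
      rw [intervalIntegral.integral_const, smul_eq_mul]
    have hmono := intervalIntegral.integral_mono_on hcd.le
      (intervalIntegrable_const)
      (contOn_int hcd.le (hk.mono hsub))
      hlb
    have : 0 < (dd - c) * (k t0 / 2) := by
      apply mul_pos (by linarith) (by linarith)
    linarith [hconst ▸ hmono]
  have hi1 : IntervalIntegrable k MeasureTheory.volume 0 c :=
    contOn_int hc0 (hk.mono (Icc_subset_Icc le_rfl hcs))
  have hi2 : IntervalIntegrable k MeasureTheory.volume c dd :=
    contOn_int hcd.le (hk.mono hsub)
  have hi3 : IntervalIntegrable k MeasureTheory.volume dd s :=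
    contOn_int hdds (hk.mono (Icc_subset_Icc hdd0 le_rfl))
  have hsplit : (∫ t in (0:ℝ)..c, k t) + (∫ t in c..dd, k t) + (∫ t in dd..s, k t)
      = ∫ t in (0:ℝ)..s, k t := by
    rw [intervalIntegral.integral_add_adjacent_intervals hi1 hi2]
    exact intervalIntegral.integral_add_adjacent_intervals (hi1.trans hi2) hi3
  have h1 : 0 ≤ ∫ t in (0:ℝ)..c, k t :=
    intervalIntegral.integral_nonneg hc0 (fun u hu => hnn u ⟨hu.1, hu.2.trans hcs⟩)
  have h3 : 0 ≤ ∫ t in dd..s, k t :=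
    intervalIntegral.integral_nonneg hdds (fun u hu => hnn u ⟨hdd0.trans hu.1, hu.2⟩)
  rw [hint] at hsplit
  linarith

lemma integral_sin_shift {s : ℝ} (hs0 : 0 ≤ s) {θ : ℝ → ℝ} (hc : ContinuousOn θ (Icc 0 s))
    (c α : ℝ) :
    (∫ t in (0:ℝ)..s, sin (θ t - c - α))
      = (∫ t in (0:ℝ)..s, sin (θ t - c)) * cos α - (∫ t in (0:ℝ)..s, cos (θ t - c)) * sin α := by
  have hsin : ContinuousOn (fun t => sin (θ t - c)) (Icc 0 s) :=
    continuous_sin.comp_continuousOn (hc.sub continuousOn_const)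
  have hcos : ContinuousOn (fun t => cos (θ t - c)) (Icc 0 s) :=
    continuous_cos.comp_continuousOn (hc.sub continuousOn_const)
  rw [intervalIntegral.integral_congr
    (g := fun t => sin (θ t - c) * cos α - cos (θ t - c) * sin α)
    (fun t _ => by rw [Real.sin_sub])]
  rw [intervalIntegral.integral_sub
    ((contOn_int hs0 hsin).mul_const _)
    ((contOn_int hs0 hcos).mul_const _),
    intervalIntegral.integral_mul_const, intervalIntegral.integral_mul_const]

lemma integral_cos_shift {s : ℝ} (hs0 : 0 ≤ s) {θ : ℝ → ℝ} (hc : ContinuousOn θ (Icc 0 s))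
    (c α : ℝ) :
    (∫ t in (0:ℝ)..s, cos (θ t - c - α))
      = (∫ t in (0:ℝ)..s, cos (θ t - c)) * cos α + (∫ t in (0:ℝ)..s, sin (θ t - c)) * sin α := by
  have hsin : ContinuousOn (fun t => sin (θ t - c)) (Icc 0 s) :=
    continuous_sin.comp_continuousOn (hc.sub continuousOn_const)
  have hcos : ContinuousOn (fun t => cos (θ t - c)) (Icc 0 s) :=
    continuous_cos.comp_continuousOn (hc.sub continuousOn_const)
  rw [intervalIntegral.integral_congr
    (g := fun t => cos (θ t - c) * cos α + sin (θ t - c) * sin α)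
    (fun t _ => by rw [Real.cos_sub])]
  rw [intervalIntegral.integral_add
    ((contOn_int hs0 hcos).mul_const _)
    ((contOn_int hs0 hsin).mul_const _),
    intervalIntegral.integral_mul_const, intervalIntegral.integral_mul_const]

lemma minmax_lip_aux {t₁ t₂ : ℝ} (h12 : t₁ ≤ t₂) {t t' : ℝ} (h : t' ≤ t) :
    |min t t₁ - min t' t₁| + |max t t₂ - max t' t₂| ≤ |t - t'| := by
  have hm1 : min t' t₁ ≤ min t t₁ := min_le_min h le_rfl
  have hm2 : max t' t₂ ≤ max t t₂ := max_le_max h le_rfl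
  rw [abs_of_nonneg (by linarith), abs_of_nonneg (by linarith), abs_of_nonneg (by linarith)]
  rcases le_total t t₂ with h2 | h2
  · have e1 : max t t₂ = t₂ := max_eq_right h2
    have e2 : max t' t₂ = t₂ := max_eq_right (h.trans h2)
    rw [e1, e2]
    rcases le_total t' t₁ with h3 | h3
    · rw [min_eq_left h3]
      rcases le_total t t₁ with h4 | h4
      · rw [min_eq_left h4]; linarith
      · rw [min_eq_right h4]; linarith
    · rw [min_eq_right h3, min_eq_right (h3.trans h)]
      linarith
  · have e1 : max t t₂ = t := max_eq_left h2
    rw [e1, min_eq_right (h12.trans h2)]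
    rcases le_total t' t₂ with h3 | h3
    · rw [max_eq_right h3]
      rcases le_total t' t₁ with h4 | h4
      · rw [min_eq_left h4]; linarith
      · rw [min_eq_right h4]; linarith
    · rw [max_eq_left h3, min_eq_right (h12.trans h3)]
      linarith

lemma minmax_lip {t₁ t₂ : ℝ} (h12 : t₁ ≤ t₂) (t t' : ℝ) :
    |min t t₁ - min t' t₁| + |max t t₂ - max t' t₂| ≤ |t - t'| := by
  rcases le_total t' t with h | h
  · exact minmax_lip_aux h12 h
  · rw [abs_sub_comm (min t t₁), abs_sub_comm (max t t₂), abs_sub_comm t]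
    exact minmax_lip_aux h12 h

open Filter Topology

lemma tendsto_arcsin_div : Filter.Tendsto (fun x : ℝ => arcsin x / x) (nhdsWithin 0 {0}ᶜ) (nhds 1) := by
  have hd := Real.hasDerivAt_arcsin (by norm_num) (by norm_num) (x := 0)
  have h1 : (1 : ℝ) / Real.sqrt (1 - 0 ^ 2) = 1 := by norm_num
  rw [h1] at hd
  rw [hasDerivAt_iff_tendsto_slope] at hd
  apply hd.congr'
  filter_upwards [self_mem_nhdsWithin] with y hy
  rw [slope_def_field, Real.arcsin_zero, sub_zero, sub_zero]

lemma tendsto_subdiv (c : ℝ) (hc : 0 ≤ c) :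
    Filter.Tendsto (fun n : ℕ => (n : ℝ) * (2 * arcsin (c / (2 * n)))) atTop (nhds c) := by
  rcases eq_or_lt_of_le hc with rfl | hcpos
  · apply Filter.Tendsto.congr' (f₁ := fun _ => (0:ℝ))
    · filter_upwards with n; simp [Real.arcsin_zero]
    · exact tendsto_const_nhds
  · have hu0 : Filter.Tendsto (fun n : ℕ => c / (2 * n)) atTop (nhds 0) := by
      apply Filter.Tendsto.div_atTop (tendsto_const_nhds)
      exact (tendsto_natCast_atTop_atTop (R := ℝ)).const_mul_atTop two_pos
    have hune : ∀ᶠ n : ℕ in atTop, c / (2 * n) ∈ ({0}ᶜ : Set ℝ) := by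
      filter_upwards [Filter.eventually_ge_atTop 1] with n hn
      have hnpos : (0:ℝ) < n := by exact_mod_cast hn
      simp only [Set.mem_compl_iff, Set.mem_singleton_iff]
      positivity
    have hu : Filter.Tendsto (fun n : ℕ => c / (2 * n)) atTop (nhdsWithin 0 {0}ᶜ) :=
      tendsto_nhdsWithin_of_tendsto_nhds_of_eventually_within _ hu0 hune
    have hcomp := tendsto_arcsin_div.comp hu
    have := (tendsto_const_nhds (x := c) (f := atTop (α := ℕ))).mul hcomp
    rw [mul_one] at this
    apply this.congr'
    filter_upwards [Filter.eventually_ge_atTop 1] with n hn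
    have hnpos : (0:ℝ) < n := by exact_mod_cast hn
    have hne : c / (2 * n) ≠ 0 := by positivity
    simp only [Function.comp_apply]
    field_simp

/-- Existence of a 1-Lipschitz turning lift for a unit-speed curvature-bounded derivative. -/
lemma exists_lift {s : ℝ} (hs1 : s < 1) (γ' : ℝ → Pt)
    (hunit : ∀ t ∈ Icc (0:ℝ) s, ‖γ' t‖ = 1)
    (hlip : LipschitzOnWith 1 γ' (Icc (0:ℝ) s)) :
    ∃ θ : ℝ → ℝ, (∀ t ∈ Icc (0:ℝ) s, γ' t = ev (θ t)) ∧
      ∀ a ∈ Icc (0:ℝ) s, ∀ b ∈ Icc (0:ℝ) s, |θ b - θ a| ≤ |b - a| := by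
  rcases lt_or_ge s 0 with hs0 | hs0
  · exact ⟨fun _ => 0, fun t ht => absurd (ht.1.trans ht.2) (not_le.2 hs0),
      fun a ha _ _ => absurd (ha.1.trans ha.2) (not_le.2 hs0)⟩
  have h0mem : (0:ℝ) ∈ Icc (0:ℝ) s := ⟨le_refl 0, hs0⟩
  set z : ℝ → ℂ := fun t => ⟨γ' t 0, γ' t 1⟩ with hzdef
  have habs : ∀ t ∈ Icc (0:ℝ) s, ‖z t‖ = 1 := by
    intro t ht
    rw [Complex.norm_def, Complex.normSq_mk]
    have h := hunit t ht
    rw [norm_pt] at h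
    rw [show γ' t 0 * γ' t 0 + γ' t 1 * γ' t 1 = γ' t 0 ^ 2 + γ' t 1 ^ 2 by ring]
    exact h
  have habs_sub : ∀ t t', ‖z t - z t'‖ = ‖γ' t - γ' t'‖ := by
    intro t t'
    rw [Complex.norm_def, Complex.normSq_apply, norm_pt]
    have h1 : (z t - z t').re = γ' t 0 - γ' t' 0 := rfl
    have h2 : (z t - z t').im = γ' t 1 - γ' t' 1 := rfl
    rw [h1, h2]
    congr 1
    simp [PiLp.sub_apply]
    ring
  have hdist : ∀ t ∈ Icc (0:ℝ) s, ∀ t' ∈ Icc (0:ℝ) s, ‖z t - z t'‖ ≤ |t - t'| := by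
    intro t ht t' ht'
    rw [habs_sub]
    have := lipschitzOnWith_iff_dist_le_mul.1 hlip t ht t' ht'
    simpa [dist_eq_norm, Real.dist_eq] using this
  have hz0 : z 0 ≠ 0 := by
    intro hh
    have := habs 0 h0mem
    rw [hh] at this
    simp at this
  set w : ℝ → ℂ := fun t => z t * (starRingEnd ℂ) (z 0) with hwdef
  have habsw : ∀ t ∈ Icc (0:ℝ) s, ‖w t‖ = 1 := by
    intro t ht
    rw [hwdef]
    simp only [norm_mul, Complex.norm_conj]
    rw [habs t ht, habs 0 h0mem, one_mul]
  have hre : ∀ t ∈ Icc (0:ℝ) s, 0 < (w t).re := by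
    intro t ht
    have h1 : w t = (z t - z 0) * (starRingEnd ℂ) (z 0) + z 0 * (starRingEnd ℂ) (z 0) := by
      rw [hwdef]; ring
    have h2 : (z 0 * (starRingEnd ℂ) (z 0)).re = 1 := by
      rw [Complex.mul_conj]
      have : Complex.normSq (z 0) = 1 := by
        have := habs 0 h0mem
        rw [Complex.norm_def] at this
        nlinarith [Complex.normSq_nonneg (z 0), Real.sq_sqrt (Complex.normSq_nonneg (z 0)),
          Real.sqrt_nonneg (Complex.normSq (z 0))]
      rw [this]; simp
    have h3 := Complex.abs_re_le_norm ((z t - z 0) * (starRingEnd ℂ) (z 0))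
    have h4 : ‖(z t - z 0) * (starRingEnd ℂ) (z 0)‖ ≤ s := by
      rw [norm_mul, Complex.norm_conj, habs 0 h0mem, mul_one]
      have := hdist t ht 0 h0mem
      rw [sub_zero, abs_of_nonneg ht.1] at this
      exact this.trans ht.2
    have h5 : -s ≤ ((z t - z 0) * (starRingEnd ℂ) (z 0)).re := by
      have := abs_le.1 (h3.trans h4)
      linarith [this.1]
    rw [h1, Complex.add_re, h2]
    linarith
  have hwne : ∀ t ∈ Icc (0:ℝ) s, w t ≠ 0 := by
    intro t ht hh
    have := hre t ht
    rw [hh] at this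
    simp at this
  set θ : ℝ → ℝ := fun t => (z 0).arg + (w t).arg with hθdef
  have hXnorm : γ' 0 0 ^ 2 + γ' 0 1 ^ 2 = 1 := by
    have h := hunit 0 h0mem
    rw [norm_pt] at h
    nlinarith [Real.sq_sqrt (show (0:ℝ) ≤ γ' 0 0 ^ 2 + γ' 0 1 ^ 2 by positivity)]
  have hrep : ∀ t ∈ Icc (0:ℝ) s, γ' t = ev (θ t) := by
    intro t ht
    have hc0 : cos ((z 0).arg) = γ' 0 0 := by
      rw [Complex.cos_arg hz0, habs 0 h0mem, div_one]
    have hs0' : sin ((z 0).arg) = γ' 0 1 := by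
      rw [Complex.sin_arg, habs 0 h0mem, div_one]
    have hcw : cos ((w t).arg) = (w t).re := by
      rw [Complex.cos_arg (hwne t ht), habsw t ht, div_one]
    have hsw : sin ((w t).arg) = (w t).im := by
      rw [Complex.sin_arg, habsw t ht, div_one]
    have hwre : (w t).re = γ' t 0 * γ' 0 0 + γ' t 1 * γ' 0 1 := by
      rw [hwdef]
      simp [Complex.mul_re, Complex.conj_re, Complex.conj_im, hzdef]
    have hwim : (w t).im = γ' t 1 * γ' 0 0 - γ' t 0 * γ' 0 1 := by
      rw [hwdef]
      simp [Complex.mul_im, Complex.conj_re, Complex.conj_im, hzdef]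
      ring
    apply pt_ext
    · show γ' t 0 = cos (θ t)
      rw [hθdef]
      show γ' t 0 = cos ((z 0).arg + (w t).arg)
      rw [Real.cos_add, hc0, hs0', hcw, hsw, hwre, hwim]
      linear_combination (-(γ' t 0)) * hXnorm
    · show γ' t 1 = sin (θ t)
      rw [hθdef]
      show γ' t 1 = sin ((z 0).arg + (w t).arg)
      rw [Real.sin_add, hc0, hs0', hcw, hsw, hwre, hwim]
      linear_combination (-(γ' t 1)) * hXnorm
  have hargs : ∀ t ∈ Icc (0:ℝ) s, |(w t).arg| < π / 2 := fun t ht =>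
    Complex.abs_arg_lt_pi_div_two_iff.2 (Or.inl (hre t ht))
  have hstep : ∀ a ∈ Icc (0:ℝ) s, ∀ b ∈ Icc (0:ℝ) s, |θ b - θ a| ≤ 2 * arcsin (|b - a| / 2) := by
    intro a ha b hb
    have hΔ : θ b - θ a = (w b).arg - (w a).arg := by rw [hθdef]; ring
    have hΔlt : |θ b - θ a| < π := by
      rw [hΔ]
      calc |(w b).arg - (w a).arg| ≤ |(w b).arg| + |(w a).arg| := abs_sub _ _
        _ < π / 2 + π / 2 := add_lt_add (hargs b hb) (hargs a ha)
        _ = π := by ring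
    have hchord : 2 * |sin ((θ b - θ a) / 2)| ≤ |b - a| := by
      have h1 : ‖ev (θ b) - ev (θ a)‖ ≤ |b - a| := by
        rw [← hrep b hb, ← hrep a ha, ← habs_sub]
        exact hdist b hb a ha
      rw [norm_ev_sub] at h1
      rwa [show θ b - θ a = (θ b) - (θ a) from rfl] at h1
    have habs2 : |θ b - θ a| / 2 ≤ π / 2 := by linarith
    have habs3 := abs_lt.1 hΔlt
    have hsinabs : sin (|θ b - θ a| / 2) = |sin ((θ b - θ a) / 2)| := by
      rcases le_total 0 (θ b - θ a) with hsgn | hsgn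
      · rw [abs_of_nonneg hsgn, abs_of_nonneg]
        exact sin_nonneg_of_nonneg_of_le_pi (by linarith) (by linarith [pi_pos])
      · rw [abs_of_nonpos hsgn, abs_of_nonpos, show -(θ b - θ a) / 2 = -((θ b - θ a) / 2) by ring,
          Real.sin_neg]
        exact Real.sin_nonpos_of_nonpos_of_neg_pi_le (by linarith) (by linarith [habs3.1])
    have key : |θ b - θ a| / 2 ≤ arcsin (|b - a| / 2) := by
      have hnn : 0 ≤ |θ b - θ a| := abs_nonneg _
      have h2 : arcsin (sin (|θ b - θ a| / 2)) = |θ b - θ a| / 2 :=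
        Real.arcsin_sin (by linarith) habs2
      rw [← h2, hsinabs]
      exact Real.monotone_arcsin (by linarith [hchord])
    linarith
  -- final 1-Lipschitz bound via subdivision
  refine ⟨θ, hrep, ?_⟩
  have main : ∀ a ∈ Icc (0:ℝ) s, ∀ b ∈ Icc (0:ℝ) s, a ≤ b → |θ b - θ a| ≤ b - a := by
    intro a ha b hb hab
    have hkey : ∀ n : ℕ, 1 ≤ n → |θ b - θ a| ≤ (n : ℝ) * (2 * arcsin ((b - a) / (2 * n))) := by
      intro n hn
      have hnpos : (0:ℝ) < n := by exact_mod_cast hn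
      set Δ := (b - a) / n with hΔdef
      have hΔnn : 0 ≤ Δ := div_nonneg (by linarith) hnpos.le
      have hmem : ∀ i : ℕ, i ≤ n → a + i * Δ ∈ Icc (0:ℝ) s := by
        intro i hi
        constructor
        · have : 0 ≤ (i:ℝ) * Δ := by positivity
          linarith [ha.1]
        · have h1 : (i:ℝ) * Δ ≤ n * Δ := by
            apply mul_le_mul_of_nonneg_right _ hΔnn
            exact_mod_cast hi
          have h2 : (n:ℝ) * Δ = b - a := by
            rw [hΔdef]; field_simp
          linarith [hb.2]
      have hdd := dist_le_range_sum_dist (fun i : ℕ => θ (a + i * Δ)) n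
      have hfn : a + (n : ℕ) * Δ = b := by
        rw [hΔdef]; field_simp; ring
      have hsum : ∀ i ∈ Finset.range n,
          dist (θ (a + i * Δ)) (θ (a + ((i + 1 : ℕ) : ℝ) * Δ)) ≤ 2 * arcsin ((b - a) / (2 * n)) := by
        intro i hi
        rw [Finset.mem_range] at hi
        have h1 := hstep (a + i * Δ) (hmem i hi.le) (a + ((i + 1 : ℕ) : ℝ) * Δ) (hmem (i + 1) hi)
        rw [Real.dist_eq, abs_sub_comm]
        push_cast at h1 ⊢
        have h2 : |(a + ((i:ℝ) + 1) * Δ) - (a + (i:ℝ) * Δ)| = Δ := by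
          rw [show (a + ((i:ℝ) + 1) * Δ) - (a + (i:ℝ) * Δ) = Δ by ring, abs_of_nonneg hΔnn]
        rw [h2] at h1
        have h3 : Δ / 2 = (b - a) / (2 * n) := by
          rw [hΔdef]; ring
        rw [h3] at h1
        exact h1
      have hbound := (hdd.trans (Finset.sum_le_sum hsum))
      rw [Finset.sum_const, Finset.card_range, nsmul_eq_mul] at hbound
      have hd0 : dist (θ (a + (0:ℕ) * Δ)) (θ (a + (n:ℕ) * Δ)) = |θ b - θ a| := by
        rw [show a + ((0:ℕ):ℝ) * Δ = a by push_cast; ring, hfn, Real.dist_eq, abs_sub_comm]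
      rw [hd0] at hbound
      exact hbound
    have := ge_of_tendsto (tendsto_subdiv (b - a) (by linarith))
      (Filter.eventually_atTop.2 ⟨1, hkey⟩)
    linarith
  intro a ha b hb
  rcases le_total a b with hab | hab
  · rw [abs_of_nonneg (by linarith : (0:ℝ) ≤ b - a)]
    exact main a ha b hb hab
  · rw [abs_of_nonpos (by linarith : b - a ≤ 0), abs_sub_comm]
    have := main b hb a ha hab
    linarith

open Filter Topology

lemma exists_root {s : ℝ} (hs0 : 0 ≤ s) (hs1 : s < 1) (θ : ℝ → ℝ)
    (hlip : ∀ a ∈ Icc (0:ℝ) s, ∀ b ∈ Icc (0:ℝ) s, |θ b - θ a| ≤ |b - a|) :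
    ∃ a : ℝ, |a| ≤ s ∧ |θ s - θ 0 - a| ≤ s ∧
      (∫ t in (0:ℝ)..s, sin (θ t - θ 0 - a)) + gg (a / 2) - gg ((θ s - θ 0 - a) / 2) = 0 ∧
      0 ≤ (∫ t in (0:ℝ)..s, cos (θ t - θ 0 - a)) - |sin a| - |sin (θ s - θ 0 - a)| := by
  have hπ3 := pi_gt_three
  have hθlip : LipschitzOnWith 1 θ (Icc (0:ℝ) s) := by
    apply LipschitzOnWith.of_dist_le_mul
    intro x hx y hy
    rw [Real.dist_eq, Real.dist_eq, NNReal.coe_one, one_mul]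
    exact hlip y hy x hx
  have hθcont : ContinuousOn θ (Icc (0:ℝ) s) := hθlip.continuousOn
  rcases eq_or_lt_of_le hs0 with heq | hspos
  · refine ⟨0, by rw [← heq]; simp, by rw [← heq]; simp [gg], by rw [← heq]; simp [gg], by
      rw [← heq]; simp⟩
  set δ := θ s - θ 0 with hδdef
  have h0mem : (0:ℝ) ∈ Icc (0:ℝ) s := ⟨le_refl 0, hs0⟩
  have hsmem : s ∈ Icc (0:ℝ) s := ⟨hs0, le_refl s⟩
  have hδs : |δ| ≤ s := by
    have := hlip 0 h0mem s hsmem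
    rwa [sub_zero, abs_of_nonneg hs0] at this
  have hδ1 := abs_le.1 hδs
  have htent1 : ∀ t ∈ Icc (0:ℝ) s, |θ t - θ 0| ≤ t := fun t ht => by
    have := hlip 0 h0mem t ht; rwa [sub_zero, abs_of_nonneg ht.1] at this
  have htent2 : ∀ t ∈ Icc (0:ℝ) s, |θ s - θ t| ≤ s - t := fun t ht => by
    have := hlip t ht s hsmem
    rwa [abs_of_nonneg (show (0:ℝ) ≤ s - t by linarith [ht.2])] at this
  set U := ∫ t in (0:ℝ)..s, cos (θ t - θ 0) with hU
  set V := ∫ t in (0:ℝ)..s, sin (θ t - θ 0) with hV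
  set F : ℝ → ℝ := fun α => V * cos α - U * sin α + gg (α / 2) - gg ((δ - α) / 2) with hF
  have hFint : ∀ α, F α
      = (∫ t in (0:ℝ)..s, sin (θ t - θ 0 - α)) + gg (α / 2) - gg ((δ - α) / 2) := by
    intro α
    rw [integral_sin_shift hs0 hθcont (θ 0) α]
  have hIcos : ∀ α, (∫ t in (0:ℝ)..s, cos (θ t - θ 0 - α)) = U * cos α + V * sin α := by
    intro α
    rw [integral_cos_shift hs0 hθcont (θ 0) α]
  have hFcont : Continuous F := by
    rw [hF]
    exact (((continuous_const.mul continuous_cos).sub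
      (continuous_const.mul continuous_sin)).add
      (gg_cont.comp (continuous_id.div_const 2))).sub
      (gg_cont.comp ((continuous_const.sub continuous_id).div_const 2))
  set p := (δ - s) / 2 with hp
  set q := (δ + s) / 2 with hq
  have hpq : p ≤ q := by rw [hp, hq]; linarith
  have hq0 : 0 ≤ q := by rw [hq]; linarith
  have hqs : q ≤ s := by rw [hq]; linarith
  have hp0 : p ≤ 0 := by rw [hp]; linarith
  have hps : -s ≤ p := by rw [hp]; linarith
  have hintc : ContinuousOn (fun t => sin (θ t - θ 0 - q)) (Icc (0:ℝ) s) :=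
    continuous_sin.comp_continuousOn ((hθcont.sub continuousOn_const).sub continuousOn_const)
  have hFq : F q ≤ 0 := by
    rw [hFint q]
    have hpoint : ∀ t ∈ Icc (0:ℝ) s, sin (θ t - θ 0 - q) ≤ -sin |t - q| := by
      intro t ht
      have h1 := abs_le.1 (htent1 t ht)
      have h2 := abs_le.1 (htent2 t ht)
      have hw2 : |t - q| ≤ π / 2 := by
        have : |t - q| ≤ s := abs_le.2 ⟨by linarith [ht.1], by linarith [ht.2]⟩
        linarith
      apply sin_le_neg_of_mem (abs_nonneg _) hw2
      · rcases le_total t q with hc | hc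
        · rw [abs_of_nonpos (by linarith)]
          linarith [h1.2]
        · rw [abs_of_nonneg (by linarith)]
          have hup : θ t - θ 0 ≤ δ + (s - t) := by
            rw [hδdef] at *
            linarith [h2.1]
          rw [hq] at hc ⊢
          linarith
      · rcases le_total t q with hc | hc
        · rw [abs_of_nonpos (by linarith)]
          linarith [h1.1, ht.1]
        · rw [abs_of_nonneg (by linarith)]
          linarith [h1.1, ht.2]
    have hcont2 : Continuous fun t : ℝ => -sin |t - q| := by
      have := (continuous_sin.comp ((continuous_id.sub (continuous_const (y := q))).abs)).neg
      exact this
    have hI2 : IntervalIntegrable (fun t => -sin |t - q|) MeasureTheory.volume 0 s :=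
      hcont2.intervalIntegrable 0 s
    have hcomp := intervalIntegral.integral_mono_on hs0 (contOn_int hs0 hintc) hI2 hpoint
    have hval : (∫ t in (0:ℝ)..s, -sin |t - q|) = -((1 - cos q) + (1 - cos (s - q))) := by
      rw [intervalIntegral.integral_neg, int_sin_abs hq0 hqs]
    have hggq : gg (q / 2) = 1 - cos q := gg_eval hq0 (by linarith)
    have hggdq : gg ((δ - q) / 2) = -(1 - cos (s - q)) := by
      have h1 : (δ - q) / 2 = -((s - q) / 2) := by rw [hq]; ring
      rw [h1, gg_neg, gg_eval (by linarith) (by linarith)]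
    rw [hval] at hcomp
    rw [hggq, hggdq]
    linarith
  have hmp0 : 0 ≤ -p := by linarith
  have hmps : -p ≤ s := by linarith
  have hcont1 : Continuous fun t : ℝ => sin |t - (-p)| := by
    have := continuous_sin.comp ((continuous_id.sub (continuous_const (y := -p))).abs)
    exact this
  have hintp : ContinuousOn (fun t => sin (θ t - θ 0 - p)) (Icc (0:ℝ) s) :=
    continuous_sin.comp_continuousOn ((hθcont.sub continuousOn_const).sub continuousOn_const)
  have hrangep : ∀ t ∈ Icc (0:ℝ) s,
      |t - (-p)| ≤ θ t - θ 0 - p ∧ θ t - θ 0 - p + |t - (-p)| < π := by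
    intro t ht
    have h1 := abs_le.1 (htent1 t ht)
    have h2 := abs_le.1 (htent2 t ht)
    constructor
    · rcases le_total t (-p) with hc | hc
      · rw [abs_of_nonpos (by linarith)]
        linarith [h1.1]
      · rw [abs_of_nonneg (by linarith)]
        have hlo : δ - (s - t) ≤ θ t - θ 0 := by
          rw [hδdef] at *
          linarith [h2.2]
        rw [hp] at hc ⊢
        linarith
    · rcases le_total t (-p) with hc | hc
      · rw [abs_of_nonpos (by linarith)]
        linarith [h1.2, ht.2]
      · rw [abs_of_nonneg (by linarith)]
        linarith [h1.2, ht.2]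
  have hpointp : ∀ t ∈ Icc (0:ℝ) s, sin |t - (-p)| ≤ sin (θ t - θ 0 - p) := by
    intro t ht
    have hw2 : |t - (-p)| ≤ π / 2 := by
      have : |t - (-p)| ≤ s := abs_le.2 ⟨by linarith [ht.1], by linarith [ht.2]⟩
      linarith
    exact sin_ge_of_mem (abs_nonneg _) hw2 (hrangep t ht).1
      (by linarith [(hrangep t ht).2, abs_nonneg (t - (-p))])
  have hFp : 0 ≤ F p := by
    rw [hFint p]
    have hI1 : IntervalIntegrable (fun t => sin |t - (-p)|) MeasureTheory.volume 0 s :=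
      hcont1.intervalIntegrable 0 s
    have hcomp := intervalIntegral.integral_mono_on hs0 hI1 (contOn_int hs0 hintp) hpointp
    have hval : (∫ t in (0:ℝ)..s, sin |t - (-p)|) = (1 - cos (-p)) + (1 - cos (s - (-p))) :=
      int_sin_abs hmp0 hmps
    have hggp : gg (p / 2) = -(1 - cos (-p)) := by
      have h1 : p / 2 = -((-p) / 2) := by ring
      rw [h1, gg_neg, gg_eval hmp0 (by linarith)]
    have hggdp : gg ((δ - p) / 2) = 1 - cos (s - (-p)) := by
      have h1 : δ - p = s - (-p) := by rw [hp]; ring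
      rw [h1, gg_eval (by linarith) (by linarith)]
    rw [hval] at hcomp
    rw [hggp, hggdp]
    linarith
  -- minimal root
  set Z : Set ℝ := Icc p q ∩ F ⁻¹' Iic 0 with hZ
  have hZne : Z.Nonempty := ⟨q, ⟨⟨hpq, le_refl q⟩, hFq⟩⟩
  have hZclosed : IsClosed Z := isClosed_Icc.inter (isClosed_Iic.preimage hFcont)
  have hZbdd : BddBelow Z := (bddBelow_Icc (a := q) (b := p)).mono inter_subset_left
  set a := sInf Z with ha
  have haZ : a ∈ Z := hZclosed.csInf_mem hZne hZbdd
  have hap : p ≤ a := haZ.1.1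
  have haq : a ≤ q := haZ.1.2
  have hFa_le : F a ≤ 0 := haZ.2
  have habs_a : |a| ≤ s := abs_le.2 ⟨by linarith, by linarith⟩
  have habs_b : |δ - a| ≤ s := abs_le.2 ⟨by rw [hq] at haq; linarith, by rw [hp] at hap; linarith⟩
  have hposleft : ∀ α, p ≤ α → α < a → 0 < F α := by
    intro α h1 h2
    by_contra hcon
    push_neg at hcon
    have hmem : α ∈ Z := ⟨⟨h1, by linarith⟩, hcon⟩
    have := csInf_le hZbdd hmem
    rw [← ha] at this
    linarith
  have hFa : F a = 0 := by
    rcases eq_or_lt_of_le hap with heq2 | hlt2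
    · exact le_antisymm hFa_le (heq2 ▸ hFp)
    · refine le_antisymm hFa_le ?_
      have htend : Tendsto F (nhdsWithin a (Iio a)) (nhds (F a)) :=
        (hFcont.continuousAt.tendsto).mono_left nhdsWithin_le_nhds
      apply ge_of_tendsto htend
      filter_upwards [Ioo_mem_nhdsLT_of_mem ⟨hlt2, le_refl a⟩] with α hα
      exact (hposleft α hα.1.le hα.2).le
  -- goodness of d
  refine ⟨a, habs_a, habs_b, by rw [← hFint a]; exact hFa, ?_⟩
  rw [hIcos a]
  rcases eq_or_lt_of_le hap with heq2 | hlt2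
  · -- boundary case : a = p, equality analysis
    have hFp0 : F p = 0 := by rw [heq2]; exact hFa
    have hint0 : (∫ t in (0:ℝ)..s, (sin (θ t - θ 0 - p) - sin |t - (-p)|)) = 0 := by
      have hi1 : IntervalIntegrable (fun t => sin (θ t - θ 0 - p)) MeasureTheory.volume 0 s :=
        contOn_int hs0 (continuous_sin.comp_continuousOn
          ((hθcont.sub continuousOn_const).sub continuousOn_const))
      have hi2 : IntervalIntegrable (fun t => sin |t - (-p)|) MeasureTheory.volume 0 s :=
        (continuous_sin.comp ((continuous_id.sub continuous_const).abs)).intervalIntegrable 0 s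
      rw [intervalIntegral.integral_sub hi1 hi2]
      have hval : (∫ t in (0:ℝ)..s, sin |t - (-p)|) = (1 - cos (-p)) + (1 - cos (s - (-p))) :=
        int_sin_abs (by linarith) (by linarith)
      have h2 := hFint p
      rw [hFp0] at h2
      have hggp : gg (p / 2) = -(1 - cos (-p)) := by
        have h1 : p / 2 = -((-p) / 2) := by ring
        rw [h1, gg_neg, gg_eval (by linarith) (by linarith)]
      have hggdp : gg ((δ - p) / 2) = 1 - cos (s - (-p)) := by
        have h1 : δ - p = s - (-p) := by rw [hp]; ring
        rw [h1, gg_eval (by linarith) (by linarith)]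
      rw [hggp, hggdp] at h2
      linarith
    have hkzero := eq_zero_of_integral_zero hspos
      (k := fun t => sin (θ t - θ 0 - p) - sin |t - (-p)|)
      (hintp.sub hcont1.continuousOn) (fun t ht => by
        linarith [hpointp t ht]) hint0
    have hcoseq : ∀ t ∈ Icc (0:ℝ) s, cos (θ t - θ 0 - p) = cos |t - (-p)| := by
      intro t ht
      have hzero := hkzero t ht
      have hsineq : sin (θ t - θ 0 - p) = sin |t - (-p)| := by
        have : sin (θ t - θ 0 - p) - sin |t - (-p)| = 0 := hzero
        linarith
      have hw2 : |t - (-p)| ≤ π / 2 := by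
        have : |t - (-p)| ≤ s := abs_le.2 ⟨by linarith [ht.1], by linarith [ht.2]⟩
        linarith
      have hxeq : θ t - θ 0 - p = |t - (-p)| :=
        sin_eq_forces (abs_nonneg _) hw2 (hrangep t ht).1
          (by linarith [(hrangep t ht).2]) hsineq
      rw [hxeq]
    have hcosint : U * cos a + V * sin a = sin (-p) + sin (s - (-p)) := by
      rw [← hIcos a, ← heq2]
      rw [intervalIntegral.integral_congr (g := fun t => cos |t - (-p)|) (fun t ht => by
        rw [uIcc_of_le hs0] at ht
        exact hcoseq t ht)]
      exact int_cos_abs hmp0 hmps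
    rw [hcosint, ← heq2]
    have hsinp : |sin p| = sin (-p) := by
      have hnn : 0 ≤ sin (-p) := sin_nonneg_of_nonneg_of_le_pi hmp0 (by linarith)
      rw [show sin p = -sin (-p) by rw [← Real.sin_neg, neg_neg], abs_neg, abs_of_nonneg hnn]
    have hsinq : |sin (δ - p)| = sin (s - (-p)) := by
      have hδp : δ - p = s - (-p) := by rw [hp]; ring
      rw [hδp, abs_of_nonneg (sin_nonneg_of_nonneg_of_le_pi (by linarith) (by linarith))]
    rw [hsinp, hsinq]
    linarith
  · -- interior case : derivative argument
    have hd3 : HasDerivAt (fun α : ℝ => gg (α / 2)) (|sin a|) a := by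
      have hinner : HasDerivAt (fun α : ℝ => α / 2) (1 / 2) a := (hasDerivAt_id a).div_const 2
      have h := (hasDerivAt_gg (a / 2)).comp a hinner
      have habs : |sin a| = 4 * |sin (a / 2)| * cos (a / 2) * (1 / 2) := by
        rw [abs_sin_double (show |a| ≤ π by linarith [habs_a])]
        ring
      rw [habs]
      exact h
    have hd4 : HasDerivAt (fun α : ℝ => gg ((δ - α) / 2)) (-|sin (δ - a)|) a := by
      have hinner : HasDerivAt (fun α : ℝ => (δ - α) / 2) ((0 - 1) / 2) a :=
        ((hasDerivAt_const a δ).sub (hasDerivAt_id a)).div_const 2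
      have h := (hasDerivAt_gg ((δ - a) / 2)).comp a hinner
      have habs : -|sin (δ - a)| = 4 * |sin ((δ - a) / 2)| * cos ((δ - a) / 2) * ((0 - 1) / 2) := by
        rw [abs_sin_double (show |δ - a| ≤ π by linarith [habs_b])]
        ring
      rw [habs]
      exact h
    have hd1 : HasDerivAt (fun α => V * cos α) (V * (-sin a)) a :=
      (Real.hasDerivAt_cos a).const_mul V
    have hd2 : HasDerivAt (fun α => U * sin α) (U * cos a) a :=
      (Real.hasDerivAt_sin a).const_mul U
    have hG : HasDerivAt F (V * (-sin a) - U * cos a + |sin a| - -|sin (δ - a)|) a := by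
      rw [hF]
      exact ((hd1.sub hd2).add hd3).sub hd4
    have hslope : V * (-sin a) - U * cos a + |sin a| - -|sin (δ - a)| ≤ 0 := by
      have hdw := hG.hasDerivWithinAt (s := Iio a)
      rw [hasDerivWithinAt_iff_tendsto_slope] at hdw
      have hself : Iio a \ {a} = Iio a := diff_singleton_eq_self (by simp)
      rw [hself] at hdw
      apply le_of_tendsto hdw
      filter_upwards [Ioo_mem_nhdsLT_of_mem ⟨hlt2, le_refl a⟩] with α hα
      rw [slope_def_field]
      apply div_nonpos_of_nonneg_of_nonpos
      · rw [hFa]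
        linarith [hposleft α hα.1.le hα.2]
      · linarith [hα.2]
    linarith [hslope]


lemma hasDerivAt_arcFormula (c E F : Pt) (e r₀ t : ℝ) :
    HasDerivAt (fun τ : ℝ => c + sin (τ - r₀) • E + (e * (1 - cos (τ - r₀))) • F)
      (cos (t - r₀) • E + (e * sin (t - r₀)) • F) t := by
  have h1 : HasDerivAt (fun τ : ℝ => sin (τ - r₀)) (cos (t - r₀)) t := by
    have := (Real.hasDerivAt_sin (t - r₀)).comp t ((hasDerivAt_id t).sub_const r₀)
    simpa [Function.comp_def] using this
  have h2 : HasDerivAt (fun τ : ℝ => e * (1 - cos (τ - r₀))) (e * sin (t - r₀)) t := by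
    have h3 : HasDerivAt (fun τ : ℝ => cos (τ - r₀)) (-sin (t - r₀)) t := by
      have := (Real.hasDerivAt_cos (t - r₀)).comp t ((hasDerivAt_id t).sub_const r₀)
      simpa [Function.comp_def] using this
    have h4 := ((hasDerivAt_const t (1:ℝ)).sub h3).const_mul e
    simpa using h4
  exact ((h1.smul_const E).const_add c).add (h2.smul_const F)

lemma build (x X y Y : Pt) (θ₀ δ aa d u v e₁ e₂ : ℝ)
    (hXe : X = ev θ₀) (hYe : Y = ev (θ₀ + δ))
    (hu : u = (y 0 - x 0) * cos θ₀ + (y 1 - x 1) * sin θ₀)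
    (hv : v = -(y 0 - x 0) * sin θ₀ + (y 1 - x 1) * cos θ₀)
    (he₁ : e₁ = if aa < 0 then (-1:ℝ) else 1)
    (he₂ : e₂ = if δ - aa < 0 then (-1:ℝ) else 1)
    (haπ : |aa| < π) (hbπ : |δ - aa| < π) (hd : 0 ≤ d)
    (hfa : v * cos aa - u * sin aa + e₁ * (1 - cos aa) - e₂ * (1 - cos (δ - aa)) = 0)
    (hda : d = u * cos aa + v * sin aa - e₁ * sin aa - e₂ * sin (δ - aa)) :
    ∃ (β β' : ℝ → Pt) (ℓ t₁ t₂ : ℝ),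
      BCPath β β' ℓ ∧ EndCond β β' ℓ x X y Y ∧ IsCSC β β' ℓ t₁ t₂ ∧
      t₁ < Real.pi ∧ ℓ - t₂ < Real.pi := by
  have he₁cases : e₁ = 1 ∨ e₁ = -1 := by
    rw [he₁]; split <;> simp
  have he₂cases : e₂ = 1 ∨ e₂ = -1 := by
    rw [he₂]; split <;> simp
  have he₁sq : e₁ ^ 2 = 1 := by rcases he₁cases with h | h <;> rw [h] <;> norm_num
  have he₂sq : e₂ ^ 2 = 1 := by rcases he₂cases with h | h <;> rw [h] <;> norm_num
  set t₁ := |aa| with ht₁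
  set t₂ := t₁ + d with ht₂
  set L := t₂ + |δ - aa| with hL
  have ht₁0 : 0 ≤ t₁ := abs_nonneg _
  have ht₁₂ : t₁ ≤ t₂ := by rw [ht₂]; linarith
  have ht₂L : t₂ ≤ L := by rw [hL]; linarith [abs_nonneg (δ - aa)]
  have he₁t : e₁ * t₁ = aa := by
    rw [he₁, ht₁]
    rcases lt_or_ge aa 0 with h | h
    · rw [if_pos h, abs_of_neg h]; ring
    · rw [if_neg (not_lt.2 h), abs_of_nonneg h]; ring
  have he₂t : e₂ * (L - t₂) = δ - aa := by
    rw [he₂, hL]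
    rcases lt_or_ge (δ - aa) 0 with h | h
    · rw [if_pos h]
      rw [abs_of_neg h]; ring
    · rw [if_neg (not_lt.2 h), abs_of_nonneg h]; ring
  have hLt₂ : L - t₂ = |δ - aa| := by rw [hL]; ring
  have hcos1 : ∀ r : ℝ, cos (e₁ * r) = cos r := by
    intro r; rcases he₁cases with h | h <;> rw [h] <;> simp
  have hsin1 : ∀ r : ℝ, sin (e₁ * r) = e₁ * sin r := by
    intro r; rcases he₁cases with h | h <;> rw [h] <;> simp
  have hcos2 : ∀ r : ℝ, cos (e₂ * r) = cos r := by
    intro r; rcases he₂cases with h | h <;> rw [h] <;> simp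
  have hsin2 : ∀ r : ℝ, sin (e₂ * r) = e₂ * sin r := by
    intro r; rcases he₂cases with h | h <;> rw [h] <;> simp
  set Θ : ℝ → ℝ := fun t => θ₀ + e₁ * min t t₁ + e₂ * (max t t₂ - t₂) with hΘ
  set B : ℝ → Pt := fun t =>
    x + sin (min t t₁) • ev θ₀ + (e₁ * (1 - cos (min t t₁))) • jv θ₀
      + (min t t₂ - min t t₁) • ev (θ₀ + aa)
      + sin (max t t₂ - t₂) • ev (θ₀ + aa)
      + (e₂ * (1 - cos (max t t₂ - t₂))) • jv (θ₀ + aa) with hB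
  set B' : ℝ → Pt := fun t => ev (Θ t) with hB'
  -- piece formulas
  have hpiece1 : ∀ t ∈ Icc (0:ℝ) t₁, B t
      = x + sin t • ev θ₀ + (e₁ * (1 - cos t)) • jv θ₀ := by
    intro t ht
    rw [hB]
    simp only [min_eq_left ht.2, min_eq_left (ht.2.trans ht₁₂),
      max_eq_right (ht.2.trans ht₁₂), sub_self, Real.sin_zero, Real.cos_zero, zero_smul,
      add_zero, mul_zero, sub_zero]
  have hpiece2 : ∀ t ∈ Icc t₁ t₂, B t
      = x + sin t₁ • ev θ₀ + (e₁ * (1 - cos t₁)) • jv θ₀ + (t - t₁) • ev (θ₀ + aa) := by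
    intro t ht
    rw [hB]
    simp only [min_eq_right ht.1, min_eq_left ht.2, max_eq_right ht.2, sub_self,
      Real.sin_zero, Real.cos_zero, zero_smul, add_zero, mul_zero, sub_zero]
  have hpiece3 : ∀ t ∈ Icc t₂ L, B t
      = x + sin t₁ • ev θ₀ + (e₁ * (1 - cos t₁)) • jv θ₀ + d • ev (θ₀ + aa)
        + sin (t - t₂) • ev (θ₀ + aa) + (e₂ * (1 - cos (t - t₂))) • jv (θ₀ + aa) := by
    intro t ht
    rw [hB]
    simp only [min_eq_right (ht₁₂.trans ht.1), min_eq_right ht.1, max_eq_left ht.1]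
    rw [show t₂ - t₁ = d by rw [ht₂]; ring]
  -- heading formulas
  have hΘ1 : ∀ t ∈ Icc (0:ℝ) t₁, Θ t = θ₀ + e₁ * t := by
    intro t ht
    rw [hΘ]
    simp only [min_eq_left ht.2, max_eq_right (ht.2.trans ht₁₂), sub_self, mul_zero, add_zero]
  have hΘ2 : ∀ t ∈ Icc t₁ t₂, Θ t = θ₀ + aa := by
    intro t ht
    rw [hΘ]
    simp only [min_eq_right ht.1, max_eq_right ht.2, sub_self, mul_zero, add_zero, he₁t]
  have hΘ3 : ∀ t ∈ Icc t₂ L, Θ t = θ₀ + aa + e₂ * (t - t₂) := by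
    intro t ht
    rw [hΘ]
    simp only [min_eq_right (ht₁₂.trans ht.1), max_eq_left ht.1]
    rw [he₁t]
  -- ev expansions
  have hev1 : ∀ t : ℝ, ev (θ₀ + e₁ * t) = cos t • ev θ₀ + (e₁ * sin t) • jv θ₀ := by
    intro t
    apply pt_ext <;>
      simp [PiLp.add_apply, PiLp.smul_apply, smul_eq_mul, Real.cos_add, Real.sin_add,
        hcos1, hsin1] <;> ring
  have hev2 : ∀ t : ℝ, ev (θ₀ + aa + e₂ * t)
      = cos t • ev (θ₀ + aa) + (e₂ * sin t) • jv (θ₀ + aa) := by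
    intro t
    apply pt_ext <;>
      simp [PiLp.add_apply, PiLp.smul_apply, smul_eq_mul, Real.cos_add, Real.sin_add,
        hcos2, hsin2] <;> ring
  -- derivatives on pieces
  have hD1 : ∀ t ∈ Icc (0:ℝ) t₁, HasDerivWithinAt B (B' t) (Icc (0:ℝ) t₁) t := by
    intro t ht
    have hg : HasDerivAt (fun τ => x + sin τ • ev θ₀ + (e₁ * (1 - cos τ)) • jv θ₀)
        (cos t • ev θ₀ + (e₁ * sin t) • jv θ₀) t := by
      have h1 := ((Real.hasDerivAt_sin t).smul_const (ev θ₀)).const_add x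
      have h2 := (((hasDerivAt_const t (1:ℝ)).sub (Real.hasDerivAt_cos t)).const_mul e₁).smul_const
        (jv θ₀)
      have := h1.add h2
      refine this.congr_deriv ?_
      congr 1
      congr 1
      ring
    have hval : B' t = cos t • ev θ₀ + (e₁ * sin t) • jv θ₀ := by
      simp only [hB']
      rw [hΘ1 t ht, hev1]
    rw [hval]
    exact (hg.hasDerivWithinAt).congr (fun τ hτ => hpiece1 τ hτ) (hpiece1 t ht)
  have hD2 : ∀ t ∈ Icc t₁ t₂, HasDerivWithinAt B (B' t) (Icc t₁ t₂) t := by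
    intro t ht
    have hg : HasDerivAt (fun τ => x + sin t₁ • ev θ₀ + (e₁ * (1 - cos t₁)) • jv θ₀
        + (τ - t₁) • ev (θ₀ + aa)) ((1:ℝ) • ev (θ₀ + aa)) t :=
      (((hasDerivAt_id t).sub_const t₁).smul_const (ev (θ₀ + aa))).const_add _
    have hval : B' t = (1:ℝ) • ev (θ₀ + aa) := by
      simp only [hB']
      rw [hΘ2 t ht, one_smul]
    rw [hval]
    exact (hg.hasDerivWithinAt).congr (fun τ hτ => hpiece2 τ hτ) (hpiece2 t ht)
  have hD3 : ∀ t ∈ Icc t₂ L, HasDerivWithinAt B (B' t) (Icc t₂ L) t := by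
    intro t ht
    have hg : HasDerivAt (fun τ => x + sin t₁ • ev θ₀ + (e₁ * (1 - cos t₁)) • jv θ₀
        + d • ev (θ₀ + aa) + sin (τ - t₂) • ev (θ₀ + aa)
        + (e₂ * (1 - cos (τ - t₂))) • jv (θ₀ + aa))
        (cos (t - t₂) • ev (θ₀ + aa) + (e₂ * sin (t - t₂)) • jv (θ₀ + aa)) t :=
      hasDerivAt_arcFormula _ _ _ e₂ t₂ t
    have hval : B' t = cos (t - t₂) • ev (θ₀ + aa) + (e₂ * sin (t - t₂)) • jv (θ₀ + aa) := by
      simp only [hB']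
      rw [hΘ3 t ht, hev2]
    rw [hval]
    exact (hg.hasDerivWithinAt).congr (fun τ hτ => hpiece3 τ hτ) (hpiece3 t ht)
  have hvac : ∀ (a b : ℝ) (t : ℝ), t ∉ Icc a b → HasDerivWithinAt B (B' t) (Icc a b) t := by
    intro a b t htn
    have h := HasFDerivWithinAt.of_notMem_closure
      (f := B) (f' := ContinuousLinearMap.smulRight (1 : ℝ →L[ℝ] ℝ) (B' t))
      (by rwa [isClosed_Icc.closure_eq])
    have h2 := h.hasDerivWithinAt
    simpa using h2
  have hasDerivMain : ∀ t ∈ Icc (0:ℝ) L, HasDerivWithinAt B (B' t) (Icc (0:ℝ) L) t := by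
    intro t ht
    have H1 : HasDerivWithinAt B (B' t) (Icc (0:ℝ) t₁) t := by
      by_cases hm : t ∈ Icc (0:ℝ) t₁
      · exact hD1 t hm
      · exact hvac _ _ _ hm
    have H2 : HasDerivWithinAt B (B' t) (Icc t₁ t₂) t := by
      by_cases hm : t ∈ Icc t₁ t₂
      · exact hD2 t hm
      · exact hvac _ _ _ hm
    have H3 : HasDerivWithinAt B (B' t) (Icc t₂ L) t := by
      by_cases hm : t ∈ Icc t₂ L
      · exact hD3 t hm
      · exact hvac _ _ _ hm
    refine (H1.union (H2.union H3)).mono ?_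
    intro τ hτ
    rcases le_total τ t₁ with hc | hc
    · exact Or.inl ⟨hτ.1, hc⟩
    · rcases le_total τ t₂ with hc2 | hc2
      · exact Or.inr (Or.inl ⟨hc, hc2⟩)
      · exact Or.inr (Or.inr ⟨hc2, hτ.2⟩)
  have hΘcont : Continuous Θ := by
    rw [hΘ]
    exact (continuous_const.add (continuous_const.mul
      (continuous_id.min continuous_const))).add (continuous_const.mul
      ((continuous_id.max continuous_const).sub continuous_const))
  have hΘlip : ∀ t t' : ℝ, |Θ t - Θ t'| ≤ |t - t'| := by
    intro t t'
    have h1 : Θ t - Θ t' = e₁ * (min t t₁ - min t' t₁) + e₂ * (max t t₂ - max t' t₂) := by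
      rw [hΘ]; ring
    have h2 := minmax_lip ht₁₂ t t'
    have he₁abs : |e₁| = 1 := by rcases he₁cases with h | h <;> rw [h] <;> simp
    have he₂abs : |e₂| = 1 := by rcases he₂cases with h | h <;> rw [h] <;> simp
    calc |Θ t - Θ t'| ≤ |e₁ * (min t t₁ - min t' t₁)| + |e₂ * (max t t₂ - max t' t₂)| := by
          rw [h1]; exact abs_add_le _ _
      _ = |min t t₁ - min t' t₁| + |max t t₂ - max t' t₂| := by
          rw [abs_mul, abs_mul, he₁abs, he₂abs, one_mul, one_mul]
      _ ≤ |t - t'| := h2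
  have hBC : BCPath B B' L := by
    refine ⟨by linarith, hasDerivMain, ?_, fun t _ => by simp only [hB']; exact norm_ev _, ?_⟩
    · exact (continuous_ev.comp hΘcont).continuousOn
    · apply LipschitzOnWith.of_dist_le_mul
      intro t ht t' ht'
      rw [NNReal.coe_one, one_mul, dist_eq_norm, Real.dist_eq]
      simp only [hB']
      exact (norm_ev_sub_le _ _).trans (hΘlip t t')
  -- scalar identities
  have hpy0 := sin_sq_add_cos_sq θ₀
  have hpya := sin_sq_add_cos_sq aa
  have key1 : e₁ * sin aa + d * cos aa + e₂ * sin (δ - aa) * cos aa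
      - e₂ * (1 - cos (δ - aa)) * sin aa = u := by
    linear_combination (cos aa) * hda + (sin aa) * hfa + u * hpya
  have key2 : e₁ * (1 - cos aa) + d * sin aa + e₂ * sin (δ - aa) * sin aa
      + e₂ * (1 - cos (δ - aa)) * cos aa = v := by
    linear_combination (sin aa) * hda - (cos aa) * hfa - (e₁ - v) * hpya
  have hu0 : y 0 - x 0 = u * cos θ₀ - v * sin θ₀ := by
    linear_combination (-(cos θ₀)) * hu + (sin θ₀) * hv - (y 0 - x 0) * hpy0
  have hv0 : y 1 - x 1 = u * sin θ₀ + v * cos θ₀ := by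
    linear_combination (-(sin θ₀)) * hu - (cos θ₀) * hv - (y 1 - x 1) * hpy0
  -- trig values at junctions
  have hsin_t₁ : sin t₁ = e₁ * sin aa := by
    rw [ht₁, he₁]
    rcases lt_or_ge aa 0 with h | h
    · rw [if_pos h, abs_of_neg h, Real.sin_neg]; ring
    · rw [if_neg (not_lt.2 h), abs_of_nonneg h]; ring
  have hcos_t₁ : cos t₁ = cos aa := by rw [ht₁, Real.cos_abs]
  have hsin_L : sin (L - t₂) = e₂ * sin (δ - aa) := by
    rw [hLt₂, he₂]
    rcases lt_or_ge (δ - aa) 0 with h | h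
    · rw [if_pos h, abs_of_neg h, Real.sin_neg]; ring
    · rw [if_neg (not_lt.2 h), abs_of_nonneg h]; ring
  have hcos_L : cos (L - t₂) = cos (δ - aa) := by rw [hLt₂, Real.cos_abs]
  -- endpoint conditions
  have hB0 : B 0 = x := by
    rw [hpiece1 0 ⟨le_refl 0, ht₁0⟩]
    simp
  have hB'0 : B' 0 = X := by
    simp only [hB']
    rw [hXe, hΘ1 0 ⟨le_refl 0, ht₁0⟩]
    norm_num
  have hBL : B L = y := by
    rw [hpiece3 L ⟨ht₂L, le_refl L⟩]
    apply pt_ext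
    · simp only [PiLp.add_apply, PiLp.smul_apply, smul_eq_mul, ev_zero, ev_one, jv_zero, jv_one,
        hsin_t₁, hcos_t₁, hsin_L, hcos_L, Real.cos_add, Real.sin_add]
      linear_combination (cos θ₀) * key1 - (sin θ₀) * key2 - hu0
    · simp only [PiLp.add_apply, PiLp.smul_apply, smul_eq_mul, ev_zero, ev_one, jv_zero, jv_one,
        hsin_t₁, hcos_t₁, hsin_L, hcos_L, Real.cos_add, Real.sin_add]
      linear_combination (sin θ₀) * key1 + (cos θ₀) * key2 - hv0
  have hB'L : B' L = Y := by
    simp only [hB']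
    rw [hYe, hΘ3 L ⟨ht₂L, le_refl L⟩]
    exact congrArg ev (by linear_combination he₂t)
  -- csc structure
  have harc1 : ArcOn B 0 t₁ := by
    refine ⟨x + e₁ • jv θ₀, fun t ht => ?_⟩
    rw [hpiece1 t ht]
    apply norm_pt_one
    have hpyt := sin_sq_add_cos_sq t
    simp only [PiLp.add_apply, PiLp.sub_apply, PiLp.smul_apply, smul_eq_mul, ev_zero, ev_one,
      jv_zero, jv_one]
    linear_combination (sin t ^ 2 + e₁ ^ 2 * cos t ^ 2) * hpy0 + (cos t ^ 2) * he₁sq + hpyt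
  have hseg : SegOn B B' t₁ t₂ := by
    intro t ht
    have hb't₁ : B' t₁ = ev (θ₀ + aa) := by
      simp only [hB']
      rw [hΘ2 t₁ ⟨le_refl t₁, ht₁₂⟩]
    rw [hpiece2 t ht, hpiece2 t₁ ⟨le_refl t₁, ht₁₂⟩, hb't₁]
    simp only [sub_self, zero_smul, add_zero]
  have harc2 : ArcOn B t₂ L := by
    refine ⟨x + sin t₁ • ev θ₀ + (e₁ * (1 - cos t₁)) • jv θ₀ + d • ev (θ₀ + aa)
      + e₂ • jv (θ₀ + aa), fun t ht => ?_⟩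
    rw [hpiece3 t ht]
    apply norm_pt_one
    have hpyt := sin_sq_add_cos_sq (t - t₂)
    have hpyb := sin_sq_add_cos_sq (θ₀ + aa)
    simp only [PiLp.add_apply, PiLp.sub_apply, PiLp.smul_apply, smul_eq_mul, ev_zero, ev_one,
      jv_zero, jv_one]
    linear_combination (sin (t - t₂) ^ 2 + e₂ ^ 2 * cos (t - t₂) ^ 2) * hpyb
      + (cos (t - t₂) ^ 2) * he₂sq + hpyt
  exact ⟨B, B', L, t₁, t₂, hBC, ⟨hB0, hB'0, hBL, hB'L⟩,
    ⟨ht₁0, ht₁₂, ht₂L, harc1, hseg, harc2⟩, haπ, by rw [hLt₂]; exact hbπ⟩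
end FragAux

/-- For every fragment there is a csc path with the same endpoint condition whose circular
components each have length less than `π`. -/
theorem fragment_has_csc_replacement (x X y Y : Pt) (hX : ‖X‖ = 1) (hY : ‖Y‖ = 1)
    (γ γ' : ℝ → Pt) (s : ℝ)
    (h : BCPath γ γ' s) (he : EndCond γ γ' s x X y Y) (hfrag : s < 1) :
    ∃ (β β' : ℝ → Pt) (ℓ t₁ t₂ : ℝ),
      BCPath β β' ℓ ∧ EndCond β β' ℓ x X y Y ∧ IsCSC β β' ℓ t₁ t₂ ∧
      t₁ < Real.pi ∧ ℓ - t₂ < Real.pi := by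
  obtain ⟨θ, hrep, hlipθ⟩ := FragAux.exists_lift hfrag γ' h.unitSpeed h.lipDeriv
  have hs0 : 0 ≤ s := h.nonneg
  have hπ3 := Real.pi_gt_three
  have h0mem : (0:ℝ) ∈ Icc (0:ℝ) s := ⟨le_refl 0, hs0⟩
  have hsmem : s ∈ Icc (0:ℝ) s := ⟨hs0, le_refl s⟩
  obtain ⟨aa, haa, hba, hfeq, hdge⟩ := FragAux.exists_root hs0 hfrag θ hlipθ
  have hθcont : ContinuousOn θ (Icc (0:ℝ) s) := by
    apply LipschitzOnWith.continuousOn (K := 1)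
    apply LipschitzOnWith.of_dist_le_mul
    intro a ha b hb
    rw [Real.dist_eq, Real.dist_eq, NNReal.coe_one, one_mul]
    exact hlipθ b hb a ha
  have hγcont : ContinuousOn γ (Icc (0:ℝ) s) := fun t ht => (h.hasDeriv t ht).continuousWithinAt
  have hintγ' : ∀ i : Fin 2, ContinuousOn (fun t => γ' t i) (Icc (0:ℝ) s) := fun i =>
    (EuclideanSpace.proj (𝕜 := ℝ) i).continuous.comp_continuousOn h.contDeriv
  have hcoord : ∀ i : Fin 2, (∫ t in (0:ℝ)..s, γ' t i) = y i - x i := by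
    intro i
    have hC : ContinuousOn (fun t => γ t i) (Icc (0:ℝ) s) :=
      (EuclideanSpace.proj (𝕜 := ℝ) i).continuous.comp_continuousOn hγcont
    have hD : ∀ t ∈ Ioo (0:ℝ) s, HasDerivWithinAt (fun τ => γ τ i) (γ' t i) (Ioi t) t := by
      intro t ht
      have h1 := h.hasDeriv t ⟨ht.1.le, ht.2.le⟩
      have h2 : HasDerivWithinAt (fun τ => γ τ i) (γ' t i) (Icc (0:ℝ) s) t := by
        have h3 := ((EuclideanSpace.proj (𝕜 := ℝ) i).hasFDerivAt
          (x := γ t)).comp_hasDerivWithinAt t h1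
        simpa [Function.comp_def] using h3
      exact h2.mono_of_mem_nhdsWithin (Icc_mem_nhdsGT_of_mem ⟨ht.1.le, ht.2⟩)
    have hftc := intervalIntegral.integral_eq_sub_of_hasDeriv_right_of_le hs0 hC hD
      (FragAux.contOn_int hs0 (hintγ' i))
    rw [hftc, he.2.2.1, he.1]
  have hγ'0 : ∀ t ∈ Icc (0:ℝ) s, γ' t 0 = cos (θ t) := fun t ht => by rw [hrep t ht]; rfl
  have hγ'1 : ∀ t ∈ Icc (0:ℝ) s, γ' t 1 = sin (θ t) := fun t ht => by rw [hrep t ht]; rfl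
  set u := (y 0 - x 0) * Real.cos (θ 0) + (y 1 - x 1) * Real.sin (θ 0) with hu
  set v := -(y 0 - x 0) * Real.sin (θ 0) + (y 1 - x 1) * Real.cos (θ 0) with hv
  have hu_int : u = ∫ t in (0:ℝ)..s, cos (θ t - θ 0) := by
    have e1 : (∫ t in (0:ℝ)..s, cos (θ t - θ 0))
        = (∫ t in (0:ℝ)..s, γ' t 0 * Real.cos (θ 0))
          + ∫ t in (0:ℝ)..s, γ' t 1 * Real.sin (θ 0) := by
      rw [← intervalIntegral.integral_add
        ((FragAux.contOn_int hs0 (hintγ' 0)).mul_const _)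
        ((FragAux.contOn_int hs0 (hintγ' 1)).mul_const _)]
      apply intervalIntegral.integral_congr
      intro t ht
      rw [uIcc_of_le hs0] at ht
      show cos (θ t - θ 0) = γ' t 0 * Real.cos (θ 0) + γ' t 1 * Real.sin (θ 0)
      rw [hγ'0 t ht, hγ'1 t ht, Real.cos_sub]
    rw [e1, intervalIntegral.integral_mul_const, intervalIntegral.integral_mul_const,
      hcoord 0, hcoord 1, hu]
  have hv_int : v = ∫ t in (0:ℝ)..s, sin (θ t - θ 0) := by
    have e1 : (∫ t in (0:ℝ)..s, sin (θ t - θ 0))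
        = (∫ t in (0:ℝ)..s, γ' t 1 * Real.cos (θ 0))
          + ∫ t in (0:ℝ)..s, γ' t 0 * (-Real.sin (θ 0)) := by
      rw [← intervalIntegral.integral_add
        ((FragAux.contOn_int hs0 (hintγ' 1)).mul_const _)
        ((FragAux.contOn_int hs0 (hintγ' 0)).mul_const _)]
      apply intervalIntegral.integral_congr
      intro t ht
      rw [uIcc_of_le hs0] at ht
      show sin (θ t - θ 0) = γ' t 1 * Real.cos (θ 0) + γ' t 0 * (-Real.sin (θ 0))
      rw [hγ'0 t ht, hγ'1 t ht, Real.sin_sub]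
      ring
    rw [e1, intervalIntegral.integral_mul_const, intervalIntegral.integral_mul_const,
      hcoord 0, hcoord 1, hv]
    ring
  set e₁ := if aa < 0 then (-1:ℝ) else 1 with he₁
  set e₂ := if θ s - θ 0 - aa < 0 then (-1:ℝ) else 1 with he₂
  have hsπ : s < π := by linarith
  have haaπ : |aa| ≤ π := haa.trans (by linarith)
  have hbaπ : |θ s - θ 0 - aa| ≤ π := hba.trans (by linarith)
  have h3 : (∫ t in (0:ℝ)..s, sin (θ t - θ 0 - aa)) = v * cos aa - u * sin aa := by
    rw [FragAux.integral_sin_shift hs0 hθcont (θ 0) aa, ← hu_int, ← hv_int]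
  have h4 : (∫ t in (0:ℝ)..s, cos (θ t - θ 0 - aa)) = u * cos aa + v * sin aa := by
    rw [FragAux.integral_cos_shift hs0 hθcont (θ 0) aa, ← hu_int, ← hv_int]
  have hfa : v * cos aa - u * sin aa + e₁ * (1 - cos aa)
      - e₂ * (1 - cos (θ s - θ 0 - aa)) = 0 := by
    have g1 := FragAux.gg_signed haaπ
    have g2 := FragAux.gg_signed hbaπ
    rw [← he₁] at g1
    rw [← he₂] at g2
    rw [← h3, ← g1, ← g2]
    exact hfeq
  set d := (∫ t in (0:ℝ)..s, cos (θ t - θ 0 - aa)) - |sin aa| - |sin (θ s - θ 0 - aa)| with hd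
  have hd0 : 0 ≤ d := hdge
  have hda : d = u * cos aa + v * sin aa - e₁ * sin aa - e₂ * sin (θ s - θ 0 - aa) := by
    have a1 := FragAux.abs_sin_signed haaπ
    have a2 := FragAux.abs_sin_signed hbaπ
    rw [← he₁] at a1
    rw [← he₂] at a2
    rw [hd, h4, a1, a2]
  have hXe : X = FragAux.ev (θ 0) := by
    rw [← he.2.1]
    exact hrep 0 h0mem
  have hYe : Y = FragAux.ev (θ 0 + (θ s - θ 0)) := by
    rw [← he.2.2.2, hrep s hsmem]
    congr 1
    ring
  exact FragAux.build x X y Y (θ 0) (θ s - θ 0) aa d u v e₁ e₂ hXe hYe hu hv he₁ he₂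
    (lt_of_le_of_lt haa hsπ) (lt_of_le_of_lt hba hsπ) hd0 hfa hda
end
end
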